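/- arXiv:2208.11579 — 9 statements merged into one kernel-verified Lean document; each statement's English description precedes it below -/
import Mathlib

section
/- Let p be a prime with p ≡ 3 (mod 4). If u, v ∈ 𝔽_p² \ {(0,0)} and r is a nonzero quadratic residue in 𝔽_p such that ‖u‖ = r‖v‖, then there exists a unique θ ∈ SO₂(𝔽_p) such that u = √r · θ v, where √r is a fixed element of 𝔽_p whose square is r. -/
open Matrix

def sqnorm {p d : ℕ} (α : Fin d → ZMod p) : ZMod p := ∑ i, α i ^ 2

lemma aux_sq_add_sq (p : ℕ) [Fact p.Prime] (hp4 : p % 4 = 3) (x y : ZMod p)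
    (h : x ^ 2 + y ^ 2 = 0) : x = 0 ∧ y = 0 := by
  by_contra hc
  have hy : y ≠ 0 := by
    rintro rfl
    simp at h
    exact hc ⟨h, rfl⟩
  have h2 : ((x / y) ^ 2 : ZMod p) = -1 := by
    field_simp
    linear_combination h
  have : IsSquare (-1 : ZMod p) := ⟨x / y, by rw [← h2]; ring⟩
  rw [ZMod.exists_sq_eq_neg_one_iff] at this
  exact this hp4

theorem stmt0 (p : ℕ) [Fact p.Prime] (hp4 : p % 4 = 3)
    (u v : Fin 2 → ZMod p) (hu : u ≠ 0) (hv : v ≠ 0)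
    (r s : ZMod p) (hr : r ≠ 0) (hs : s ^ 2 = r)
    (huv : sqnorm u = r * sqnorm v) :
    ∃! θ : Matrix (Fin 2) (Fin 2) (ZMod p),
      θᵀ * θ = 1 ∧ θ.det = 1 ∧ u = s • θ.mulVec v := by
  have hsn : sqnorm v = v 0 ^ 2 + v 1 ^ 2 := Fin.sum_univ_two _
  have hun : sqnorm u = u 0 ^ 2 + u 1 ^ 2 := Fin.sum_univ_two _
  have hs0 : s ≠ 0 := by rintro rfl; simp at hs; exact hr hs.symm
  have hn : v 0 ^ 2 + v 1 ^ 2 ≠ 0 := by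
    intro h
    obtain ⟨h0, h1⟩ := aux_sq_add_sq p hp4 _ _ h
    apply hv; funext i; fin_cases i <;> assumption
  have key : u 0 ^ 2 + u 1 ^ 2 = s ^ 2 * (v 0 ^ 2 + v 1 ^ 2) := by
    rw [← hun, huv, ← hs, hsn]
  have hsn0 : s * (v 0 ^ 2 + v 1 ^ 2) ≠ 0 := mul_ne_zero hs0 hn
  obtain ⟨a, b, hab, e0, e1⟩ : ∃ a b : ZMod p, a ^ 2 + b ^ 2 = 1 ∧
      s * (a * v 0 - b * v 1) = u 0 ∧ s * (b * v 0 + a * v 1) = u 1 := by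
    refine ⟨(u 0 * v 0 + u 1 * v 1) / (s * (v 0 ^ 2 + v 1 ^ 2)),
      (u 1 * v 0 - u 0 * v 1) / (s * (v 0 ^ 2 + v 1 ^ 2)), ?_, ?_, ?_⟩
    · have h1 : (u 0 * v 0 + u 1 * v 1) ^ 2 + (u 1 * v 0 - u 0 * v 1) ^ 2
          = (s * (v 0 ^ 2 + v 1 ^ 2)) ^ 2 := by
        linear_combination (v 0 ^ 2 + v 1 ^ 2) * key
      rw [div_pow, div_pow, ← add_div, h1, div_self (pow_ne_zero 2 hsn0)]
    · field_simp
      ring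
    · field_simp
      ring
  refine ⟨!![a, -b; b, a], ⟨?_, ?_, ?_⟩, ?_⟩
  · ext i j
    fin_cases i <;> fin_cases j <;>
      simp [Matrix.mul_apply, Fin.sum_univ_two, Matrix.one_apply, Matrix.vecHead,
        Matrix.vecTail]
    · show a * a + b * b = 1
      linear_combination hab
    · show -(a * b) + b * a = 0
      ring
    · show -(b * a) + a * b = 0
      ring
    · show b * b + a * a = 1
      linear_combination hab
  · simp [Matrix.det_fin_two]
    linear_combination hab
  · funext i
    fin_cases i <;>
      simp [Matrix.mulVec, dotProduct, Fin.sum_univ_two, Matrix.vecHead, Matrix.vecTail]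
    · linear_combination -e0
    · linear_combination -e1
  · rintro θ ⟨horth, hdet, hmv⟩
    have hent : ∀ i j, (θᵀ * θ) i j = (1 : Matrix (Fin 2) (Fin 2) (ZMod p)) i j := by
      rw [horth]; intro i j; rfl
    have o00 := hent 0 0
    have o01 := hent 0 1
    simp [Matrix.mul_apply, Fin.sum_univ_two, Matrix.one_apply] at o00 o01
    rw [Matrix.det_fin_two] at hdet
    have hd : θ 0 1 = -θ 1 0 := by
      linear_combination θ 0 0 * o01 - θ 1 0 * hdet - θ 0 1 * o00
    have hf : θ 1 1 = θ 0 0 := by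
      linear_combination θ 1 0 * o01 + θ 0 0 * hdet - θ 1 1 * o00
    have m0 := congrFun hmv 0
    have m1 := congrFun hmv 1
    simp [Matrix.mulVec, dotProduct, Fin.sum_univ_two] at m0 m1
    rw [hd] at m0
    rw [hf] at m1
    have c1 : θ 0 0 = a := by
      have h : s * (v 0 ^ 2 + v 1 ^ 2) * (θ 0 0 - a) = 0 := by
        linear_combination -v 0 * m0 - v 0 * e0 - v 1 * m1 - v 1 * e1
      rcases mul_eq_zero.mp h with h' | h'
      · exact absurd h' hsn0
      · exact sub_eq_zero.mp h'
    have c2 : θ 1 0 = b := by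
      have h : s * (v 0 ^ 2 + v 1 ^ 2) * (θ 1 0 - b) = 0 := by
        linear_combination -v 0 * m1 - v 0 * e1 + v 1 * m0 + v 1 * e0
      rcases mul_eq_zero.mp h with h' | h'
      · exact absurd h' hsn0
      · exact sub_eq_zero.mp h'
    ext i j
    fin_cases i <;> fin_cases j <;>
      simp [Matrix.vecHead, Matrix.vecTail]
    · exact c1
    · rw [hd, c2]
    · exact c2
    · rw [hf, c1]
end

section
/- Let G be a simple graph with n vertices and e(G) edges, and k ≥ 1. Then the number of homomorphic images of the k-path, i.e., |{(v₁, …, v_{k+1}) ∈ V^{k+1} : vᵢvᵢ₊₁ is an edge of G for all i ∈ [k]}|, is at least (2e(G))^k / n^{k−1}. -/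
open Finset Real
set_option linter.unusedSectionVars false

namespace BR

variable {V : Type*} [Fintype V] [DecidableEq V] (G : SimpleGraph V) [DecidableRel G.Adj]

noncomputable def dR (v : V) : ℝ := (G.degree v : ℝ)

lemma dR_nonneg (v : V) : 0 ≤ dR G v := Nat.cast_nonneg _

def Wk (k : ℕ) : Finset (Fin (k+1) → V) :=
  Finset.univ.filter (fun ω => ∀ i : Fin k, G.Adj (ω i.castSucc) (ω i.succ))

lemma mem_Wk {k : ℕ} {ω : Fin (k+1) → V} :
    ω ∈ Wk G k ↔ ∀ i : Fin k, G.Adj (ω i.castSucc) (ω i.succ) := by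
  simp [Wk]

noncomputable def q (k : ℕ) (ω : Fin (k+1) → V) : ℝ :=
  dR G (ω 0) * dR G (ω (Fin.last k)) * ∏ i, (dR G (ω i))⁻¹

lemma q_nonneg (k : ℕ) (ω : Fin (k+1) → V) : 0 ≤ q G k ω := by
  unfold q
  have h1 : (0:ℝ) ≤ ∏ i, (dR G (ω i))⁻¹ :=
    Finset.prod_nonneg fun i _ => inv_nonneg.2 (dR_nonneg G (ω i))
  exact mul_nonneg (mul_nonneg (dR_nonneg G _) (dR_nonneg G _)) h1

lemma deg_pos {k : ℕ} (hk : 1 ≤ k) {ω : Fin (k+1) → V} (hω : ω ∈ Wk G k)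
    (i : Fin (k+1)) : 0 < dR G (ω i) := by
  rw [mem_Wk] at hω
  have hdeg : ∃ w, G.Adj (ω i) w := by
    by_cases h : (i : ℕ) < k
    · have h2 := hω ⟨i, h⟩
      have : (⟨(i : ℕ), h⟩ : Fin k).castSucc = i := by
        apply Fin.ext; simp
      rw [this] at h2
      exact ⟨_, h2⟩
    · have hik : (i : ℕ) = k := by omega
      have h2 := hω ⟨k - 1, by omega⟩
      have : (⟨k - 1, by omega⟩ : Fin k).succ = i := by
        apply Fin.ext; simp; omega
      rw [this] at h2
      exact ⟨_, h2.symm⟩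
  obtain ⟨w, hw⟩ := hdeg
  have : 0 < G.degree (ω i) := (G.degree_pos_iff_exists_adj _).2 ⟨w, hw⟩
  unfold dR
  exact_mod_cast this

lemma q_pos {k : ℕ} (hk : 1 ≤ k) {ω : Fin (k+1) → V} (hω : ω ∈ Wk G k) :
    0 < q G k ω := by
  unfold q
  have := deg_pos G hk hω
  have h1 : (0:ℝ) < ∏ i, (dR G (ω i))⁻¹ :=
    Finset.prod_pos fun i _ => inv_pos.2 (this i)
  exact mul_pos (mul_pos (this 0) (this (Fin.last k))) h1

lemma rev_mem {k : ℕ} {ω : Fin (k+1) → V} (hω : ω ∈ Wk G k) :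
    (ω ∘ Fin.rev) ∈ Wk G k := by
  rw [mem_Wk] at hω ⊢
  intro i
  simp only [Function.comp_apply, Fin.rev_castSucc, Fin.rev_succ]
  exact (hω i.rev).symm

lemma q_rev (k : ℕ) (ω : Fin (k+1) → V) : q G k (ω ∘ Fin.rev) = q G k ω := by
  unfold q
  simp only [Function.comp_apply, Fin.rev_zero, Fin.rev_last]
  have : (∏ i, (dR G (ω (Fin.rev i)))⁻¹) = ∏ i, (dR G (ω i))⁻¹ :=
    Fintype.prod_equiv Fin.revPerm _ _ (fun i => rfl)
  rw [this]; ring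

noncomputable def S (k : ℕ) (i : Fin (k+1)) (v : V) : ℝ :=
  ∑ ω ∈ (Wk G k).filter (fun ω => ω i = v), q G k ω

lemma S_rev (k : ℕ) (i : Fin (k+1)) (v : V) : S G k i v = S G k i.rev v := by
  unfold S
  apply Finset.sum_nbij' (fun ω => ω ∘ Fin.rev) (fun ω => ω ∘ Fin.rev)
  · intro ω hω
    rw [Finset.mem_filter] at hω ⊢
    refine ⟨rev_mem G hω.1, ?_⟩
    simpa [Fin.rev_rev] using hω.2
  · intro ω hω
    rw [Finset.mem_filter] at hω ⊢
    refine ⟨rev_mem G hω.1, ?_⟩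
    simpa using hω.2
  · intro ω _; funext x; simp [Fin.rev_rev]
  · intro ω _; funext x; simp [Fin.rev_rev]
  · intro ω _; exact (q_rev G k ω).symm

lemma mem_cons_iff {k : ℕ} (v : V) (ω' : Fin (k+1) → V) :
    (Fin.cons v ω' ∈ Wk G (k+1)) ↔ G.Adj v (ω' 0) ∧ ω' ∈ Wk G k := by
  rw [mem_Wk, mem_Wk]
  constructor
  · intro h
    constructor
    · have h0 := h 0
      simpa using h0
    · intro j
      have hj := h j.succ
      rw [← Fin.succ_castSucc] at hj
      simpa [Fin.cons_succ] using hj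
  · rintro ⟨h0, h⟩ i
    induction i using Fin.cases with
    | zero => simpa using h0
    | succ j =>
      rw [← Fin.succ_castSucc]
      simpa [Fin.cons_succ] using h j

lemma cons_decomp (k : ℕ) (f : (Fin (k+2) → V) → ℝ) :
    ∑ ω ∈ Wk G (k+1), f ω
      = ∑ ω' ∈ Wk G k, ∑ v ∈ G.neighborFinset (ω' 0), f (Fin.cons v ω') := by
  rw [← Finset.sum_sigma (Wk G k) (fun ω' => G.neighborFinset (ω' 0))
    (fun p => f (Fin.cons p.2 p.1))]
  apply Finset.sum_nbij' (fun ω => ⟨ω ∘ Fin.succ, ω 0⟩)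
    (fun p => Fin.cons p.2 p.1)
  · intro ω hω
    have hcons : (Fin.cons (ω 0) (ω ∘ Fin.succ) : Fin (k+2) → V) = ω := by
      funext x
      induction x using Fin.cases with
      | zero => rfl
      | succ j => rfl
    rw [← hcons, mem_cons_iff] at hω
    rw [Finset.mem_sigma]
    exact ⟨hω.2, (SimpleGraph.mem_neighborFinset _ _ _).2 hω.1.symm⟩
  · intro p hp
    rw [Finset.mem_sigma] at hp
    rw [mem_cons_iff]
    exact ⟨((SimpleGraph.mem_neighborFinset _ _ _).1 hp.2).symm, hp.1⟩
  · intro ω _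
    funext x
    induction x using Fin.cases with
    | zero => rfl
    | succ j => rfl
  · intro p _
    have h1 : (Fin.cons p.2 p.1 : Fin (k+2) → V) ∘ Fin.succ = p.1 := by
      funext x; simp [Fin.cons_succ]
    exact Sigma.ext h1 (by simp)
  · intro ω _
    congr 1
    funext x
    induction x using Fin.cases with
    | zero => rfl
    | succ j => rfl

lemma q_cons {k : ℕ} (hk : 1 ≤ k) {ω' : Fin (k+1) → V} (hω' : ω' ∈ Wk G k)
    {v : V} (hv : G.Adj v (ω' 0)) :
    q G (k+1) (Fin.cons v ω') = q G k ω' * (dR G (ω' 0))⁻¹ := by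
  have hdv : 0 < dR G v := by
    unfold dR
    exact_mod_cast (G.degree_pos_iff_exists_adj v).2 ⟨_, hv⟩
  have hd0 : 0 < dR G (ω' 0) := deg_pos G hk hω' 0
  unfold q
  rw [Fin.prod_univ_succ]
  have hlast : (Fin.cons v ω' : Fin (k+2) → V) (Fin.last (k+1)) = ω' (Fin.last k) := by
    rw [← Fin.succ_last, Fin.cons_succ]
  have h0 : (Fin.cons v ω' : Fin (k+2) → V) 0 = v := rfl
  rw [hlast, h0]
  have hsucc : (∏ i : Fin (k+1), (dR G ((Fin.cons v ω' : Fin (k+2) → V) i.succ))⁻¹)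
      = ∏ i : Fin (k+1), (dR G (ω' i))⁻¹ := by
    apply Finset.prod_congr rfl
    intro i _
    rw [Fin.cons_succ]
  rw [hsucc]
  have e1 : dR G v * (dR G v)⁻¹ = 1 := mul_inv_cancel₀ hdv.ne'
  have e2 : dR G (ω' 0) * (dR G (ω' 0))⁻¹ = 1 := mul_inv_cancel₀ hd0.ne'
  linear_combination (dR G (ω' (Fin.last k)) * ∏ i : Fin (k+1), (dR G (ω' i))⁻¹) * e1
    - (dR G (ω' (Fin.last k)) * ∏ i : Fin (k+1), (dR G (ω' i))⁻¹) * e2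

lemma cons_sum {k : ℕ} (hk : 1 ≤ k) (F : (Fin (k+1) → V) → ℝ) :
    ∑ ω ∈ Wk G (k+1), F (ω ∘ Fin.succ) * q G (k+1) ω
      = ∑ ω' ∈ Wk G k, F ω' * q G k ω' := by
  rw [cons_decomp]
  apply Finset.sum_congr rfl
  intro ω' hω'
  have hd0 : 0 < dR G (ω' 0) := deg_pos G hk hω' 0
  have : ∀ v ∈ G.neighborFinset (ω' 0),
      F ((Fin.cons v ω' : Fin (k+2) → V) ∘ Fin.succ) * q G (k+1) (Fin.cons v ω')
        = F ω' * (q G k ω' * (dR G (ω' 0))⁻¹) := by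
    intro v hv
    have hadj : G.Adj v (ω' 0) := ((SimpleGraph.mem_neighborFinset _ _ _).1 hv).symm
    have hcomp : (Fin.cons v ω' : Fin (k+2) → V) ∘ Fin.succ = ω' := by
      funext x; simp [Fin.cons_succ]
    rw [hcomp, q_cons G hk hω' hadj]
  rw [Finset.sum_congr rfl this, Finset.sum_const]
  have hcard : #(G.neighborFinset (ω' 0)) = G.degree (ω' 0) := rfl
  rw [hcard, nsmul_eq_mul]
  have : (G.degree (ω' 0) : ℝ) = dR G (ω' 0) := rfl
  rw [this]
  field_simp

lemma q_one {ω : Fin 2 → V} (hω : ω ∈ Wk G 1) : q G 1 ω = 1 := by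
  have h0 := deg_pos G le_rfl hω 0
  have h1 := deg_pos G le_rfl hω 1
  unfold q
  rw [Fin.prod_univ_two]
  have hl : (Fin.last 1) = (1 : Fin 2) := rfl
  rw [hl]
  field_simp

lemma S_one_zero (v : V) : S G 1 0 v = dR G v := by
  unfold S
  rw [Finset.sum_congr rfl (fun ω hω => q_one G (Finset.mem_filter.1 hω).1),
    Finset.sum_const, nsmul_eq_mul, mul_one]
  have hcard : #((Wk G 1).filter (fun ω => ω 0 = v)) = G.degree v := by
    apply Finset.card_bij' (fun ω _ => ω 1) (fun u _ => ![v, u])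
    · intro ω hω
      rw [Finset.mem_filter, mem_Wk] at hω
      have hadj := hω.1 0
      have h0 : ((0 : Fin 1).castSucc) = (0 : Fin 2) := rfl
      have h1 : ((0 : Fin 1).succ) = (1 : Fin 2) := rfl
      rw [h0, h1, hω.2] at hadj
      exact (SimpleGraph.mem_neighborFinset _ _ _).2 hadj
    · intro u hu
      rw [Finset.mem_filter, mem_Wk]
      refine ⟨fun i => ?_, rfl⟩
      have : i = 0 := Subsingleton.elim _ _
      subst this
      simpa using (SimpleGraph.mem_neighborFinset _ _ _).1 hu
    · intro ω hω
      rw [Finset.mem_filter] at hω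
      funext x
      fin_cases x
      · exact hω.2.symm
      · rfl
    · intro u _
      rfl
  rw [hcard]
  rfl

theorem marg : ∀ k, 1 ≤ k → ∀ (i : Fin (k+1)) (v : V), S G k i v = dR G v := by
  intro k
  induction k with
  | zero => exact fun h => absurd h (by omega)
  | succ n IH =>
    intro _ i v
    by_cases hn : n = 0
    · subst hn
      induction i using Fin.cases with
      | zero => exact S_one_zero G v
      | succ j =>
        have hj : j = 0 := Subsingleton.elim _ _
        subst hj
        rw [S_rev]
        have h : Fin.rev ((0 : Fin 1).succ) = 0 := rfl
        rw [h]
        exact S_one_zero G v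
    · have hn1 : 1 ≤ n := by omega
      have hsucc : ∀ (j : Fin (n+1)) (w : V), S G (n+1) j.succ w = dR G w := by
        intro j w
        unfold S
        rw [Finset.sum_filter]
        have hrw : ∀ ω ∈ Wk G (n+1),
            (if ω j.succ = w then q G (n+1) ω else 0)
              = (if (ω ∘ Fin.succ) j = w then (1:ℝ) else 0) * q G (n+1) ω := by
          intro ω _
          rw [ite_mul, one_mul, zero_mul]
          rfl
        rw [Finset.sum_congr rfl hrw, cons_sum G hn1 (fun ω' => if ω' j = w then (1:ℝ) else 0)]
        have hback : ∀ ω' ∈ Wk G n,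
            (if ω' j = w then (1:ℝ) else 0) * q G n ω'
              = (if ω' j = w then q G n ω' else 0) := by
          intro ω' _
          rw [ite_mul, one_mul, zero_mul]
        rw [Finset.sum_congr rfl hback, ← Finset.sum_filter]
        exact IH hn1 j w
      induction i using Fin.cases with
      | zero =>
        rw [S_rev]
        have h1 : Fin.rev (0 : Fin (n+2)) = Fin.last (n+1) := Fin.rev_zero _
        rw [h1, ← Fin.succ_last]
        exact hsucc (Fin.last n) v
      | succ j => exact hsucc j v

lemma sum_dR : ∑ v, dR G v = 2 * (G.edgeFinset.card : ℝ) := by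
  unfold dR
  exact_mod_cast congrArg (fun n : ℕ => (n : ℝ)) G.sum_degrees_eq_twice_card_edges

lemma Nlem {k : ℕ} (hk : 1 ≤ k) : ∑ ω ∈ Wk G k, q G k ω = 2 * (G.edgeFinset.card : ℝ) := by
  rw [← Finset.sum_fiberwise (Wk G k) (fun ω => ω 0) (q G k), ← sum_dR G]
  exact Finset.sum_congr rfl (fun v _ => marg G k hk 0 v)

lemma prod_fiber {k : ℕ} (hk : 1 ≤ k) {m : ℝ} (hm : 0 < m) (i : Fin (k+1)) (f : V → ℝ)
    (hf : ∀ v, 0 ≤ f v) :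
    ∏ ω ∈ Wk G k, f (ω i) ^ (q G k ω / m) = ∏ v, f v ^ (dR G v / m) := by
  rw [← Finset.prod_fiberwise (Wk G k) (fun ω => ω i)
    (fun ω => f (ω i) ^ (q G k ω / m))]
  apply Finset.prod_congr rfl
  intro v _
  have h1 : ∀ ω ∈ (Wk G k).filter (fun ω => ω i = v),
      f (ω i) ^ (q G k ω / m) = f v ^ (q G k ω / m) := fun ω hω => by
    rw [(Finset.mem_filter.1 hω).2]
  rw [Finset.prod_congr rfl h1,
    ← Real.rpow_sum_of_nonneg (hf v) (fun ω _ => div_nonneg (q_nonneg G k ω) hm.le),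
    ← Finset.sum_div]
  have hS := marg G k hk i v
  unfold S at hS
  rw [hS]

theorem main {k : ℕ} (hk : 1 ≤ k) :
    (2 * (G.edgeFinset.card : ℝ)) ^ k / (Fintype.card V : ℝ) ^ (k - 1)
      ≤ (#(Wk G k) : ℝ) := by
  by_cases hm0 : G.edgeFinset.card = 0
  · rw [hm0]
    norm_num [zero_pow (by omega : k ≠ 0)]
  obtain ⟨m, hmeq⟩ : ∃ x : ℝ, x = 2 * (G.edgeFinset.card : ℝ) := ⟨_, rfl⟩
  rw [← hmeq]
  have hm' : (0:ℝ) < m := by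
    rw [hmeq]
    have : (0:ℝ) < (G.edgeFinset.card : ℝ) := by exact_mod_cast Nat.pos_of_ne_zero hm0
    linarith
  have hne : Nonempty V := by
    obtain ⟨e, he⟩ := Finset.card_pos.mp (Nat.pos_of_ne_zero hm0)
    induction e using Sym2.ind with
    | _ u w => exact ⟨u⟩
  have hn : (0:ℝ) < (Fintype.card V : ℝ) := by exact_mod_cast Fintype.card_pos
  have hsum : ∑ ω ∈ Wk G k, q G k ω = m := by rw [Nlem G hk, hmeq]
  have hw1 : ∑ ω ∈ Wk G k, q G k ω / m = 1 := by
    rw [← Finset.sum_div, hsum, div_self hm'.ne']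
  have amgm := Real.geom_mean_le_arith_mean_weighted (Wk G k)
      (fun ω => q G k ω / m) (fun ω => m / q G k ω)
      (fun ω _ => div_nonneg (q_nonneg G k ω) hm'.le) hw1
      (fun ω _ => div_nonneg hm'.le (q_nonneg G k ω))
  have hRHS : ∑ ω ∈ Wk G k, (q G k ω / m) * (m / q G k ω) = (#(Wk G k) : ℝ) := by
    have h1 : ∀ ω ∈ Wk G k, (q G k ω / m) * (m / q G k ω) = 1 := by
      intro ω hω
      have hq := q_pos G hk hω
      field_simp
    rw [Finset.sum_congr rfl h1, Finset.sum_const, nsmul_eq_mul, mul_one]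
  set A : ℝ := ∏ v, ((dR G v)⁻¹) ^ (dR G v / m) with hAdef
  set B : ℝ := ∏ v, (dR G v) ^ (dR G v / m) with hBdef
  have key : ∏ ω ∈ Wk G k, (m / q G k ω) ^ (q G k ω / m) = m * (A * (A * B ^ (k+1))) := by
    have hz : ∀ ω ∈ Wk G k,
        (m / q G k ω) ^ (q G k ω / m)
          = m ^ (q G k ω / m) * (((dR G (ω 0))⁻¹) ^ (q G k ω / m)
            * (((dR G (ω (Fin.last k)))⁻¹) ^ (q G k ω / m)
              * (∏ i, dR G (ω i)) ^ (q G k ω / m))) := by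
      intro ω hω
      have hd := deg_pos G hk hω
      have hprod : (0:ℝ) < ∏ i, dR G (ω i) := Finset.prod_pos (fun i _ => hd i)
      have hXq : (((dR G (ω 0))⁻¹) * (((dR G (ω (Fin.last k)))⁻¹) * (∏ i, dR G (ω i))))
          * q G k ω = 1 := by
        unfold q
        rw [Finset.prod_inv_distrib]
        have h0 := (hd 0).ne'
        have hl := (hd (Fin.last k)).ne'
        field_simp
      have hzz : m / q G k ω
          = m * (((dR G (ω 0))⁻¹) * (((dR G (ω (Fin.last k)))⁻¹) * (∏ i, dR G (ω i)))) := by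
        rw [div_eq_iff (q_pos G hk hω).ne', mul_assoc, hXq, mul_one]
      have hnn : ∀ i, (0:ℝ) ≤ dR G (ω i) := fun i => (hd i).le
      rw [hzz,
        Real.mul_rpow hm'.le (mul_nonneg (inv_nonneg.2 (hnn 0))
          (mul_nonneg (inv_nonneg.2 (hnn _)) hprod.le)),
        Real.mul_rpow (inv_nonneg.2 (hnn 0)) (mul_nonneg (inv_nonneg.2 (hnn _)) hprod.le),
        Real.mul_rpow (inv_nonneg.2 (hnn _)) hprod.le]
    rw [Finset.prod_congr rfl hz, Finset.prod_mul_distrib, Finset.prod_mul_distrib,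
      Finset.prod_mul_distrib]
    have t0 : ∏ ω ∈ Wk G k, m ^ (q G k ω / m) = m := by
      rw [← Real.rpow_sum_of_pos hm', hw1, Real.rpow_one]
    have t1 : ∏ ω ∈ Wk G k, ((dR G (ω 0))⁻¹) ^ (q G k ω / m) = A :=
      prod_fiber G hk hm' 0 _ (fun v => inv_nonneg.2 (dR_nonneg G v))
    have t2 : ∏ ω ∈ Wk G k, ((dR G (ω (Fin.last k)))⁻¹) ^ (q G k ω / m) = A :=
      prod_fiber G hk hm' (Fin.last k) _ (fun v => inv_nonneg.2 (dR_nonneg G v))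
    have t3 : ∏ ω ∈ Wk G k, (∏ i, dR G (ω i)) ^ (q G k ω / m) = B ^ (k+1) := by
      have e1 : ∀ ω ∈ Wk G k, (∏ i, dR G (ω i)) ^ (q G k ω / m)
          = ∏ i, (dR G (ω i)) ^ (q G k ω / m) := by
        intro ω _
        exact (Real.finset_prod_rpow Finset.univ _ (fun i _ => dR_nonneg G _) _).symm
      rw [Finset.prod_congr rfl e1, Finset.prod_comm]
      have e2 : ∀ i : Fin (k+1), (∏ ω ∈ Wk G k, (dR G (ω i)) ^ (q G k ω / m)) = B :=
        fun i => prod_fiber G hk hm' i _ (dR_nonneg G)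
      rw [Finset.prod_congr rfl (fun i _ => e2 i), Finset.prod_const, Finset.card_univ,
        Fintype.card_fin]
    rw [t0, t1, t2, t3]
  have hAB : A * B = 1 := by
    rw [hAdef, hBdef, ← Finset.prod_mul_distrib]
    apply Finset.prod_eq_one
    intro v _
    by_cases h : dR G v = 0
    · rw [h, zero_div, Real.rpow_zero, Real.rpow_zero, one_mul]
    · rw [← Real.mul_rpow (inv_nonneg.2 (dR_nonneg G v)) (dR_nonneg G v),
        inv_mul_cancel₀ h, Real.one_rpow]
  have hApos : 0 < A := by
    rw [hAdef]
    apply Finset.prod_pos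
    intro v _
    by_cases h : dR G v = 0
    · rw [h, zero_div, Real.rpow_zero]; norm_num
    · have hpos : 0 < dR G v := lt_of_le_of_ne (dR_nonneg G v) (Ne.symm h)
      exact Real.rpow_pos_of_pos (inv_pos.2 hpos) _
  have hBA : B = A⁻¹ := eq_inv_of_mul_eq_one_right (mul_comm A B ▸ hAB)
  have hA_le : A ≤ (Fintype.card V : ℝ) / m := by
    have hsw : ∑ v, dR G v / m = 1 := by
      rw [← Finset.sum_div, sum_dR, ← hmeq, div_self hm'.ne']
    have h1 := Real.geom_mean_le_arith_mean_weighted Finset.univ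
        (fun v => dR G v / m) (fun v => (dR G v)⁻¹)
        (fun v _ => div_nonneg (dR_nonneg G v) hm'.le) hsw
        (fun v _ => inv_nonneg.2 (dR_nonneg G v))
    refine le_trans h1 ?_
    have h2 : ∀ v ∈ (Finset.univ : Finset V), dR G v / m * (dR G v)⁻¹ ≤ 1 / m := by
      intro v _
      by_cases h : dR G v = 0
      · rw [h]; simp; positivity
      · rw [div_mul_eq_mul_div, mul_inv_cancel₀ h]
    refine le_trans (Finset.sum_le_sum h2) ?_
    rw [Finset.sum_const, Finset.card_univ, nsmul_eq_mul]
    rw [mul_one_div]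
  have hB_ge : m / (Fintype.card V : ℝ) ≤ B := by
    rw [hBA, show m / (Fintype.card V : ℝ) = ((Fintype.card V : ℝ) / m)⁻¹ by rw [inv_div]]
    exact inv_anti₀ hApos hA_le
  have final : m * B ^ (k-1) ≤ (#(Wk G k) : ℝ) := by
    have h2 := le_trans (le_of_eq key.symm) (le_trans amgm (le_of_eq hRHS))
    have h3 : m * (A * (A * B^(k+1))) = m * B^(k-1) := by
      have hkk : k + 1 = 2 + (k - 1) := by omega
      rw [hkk, pow_add]
      calc m * (A * (A * (B^2 * B^(k-1)))) = m * ((A*B)*(A*B)) * B^(k-1) := by ring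
        _ = m * B^(k-1) := by rw [hAB]; ring
    rwa [h3] at h2
  calc m ^ k / (Fintype.card V : ℝ)^(k-1) = m * (m / (Fintype.card V : ℝ))^(k-1) := by
        rw [div_pow]
        have hmk : m ^ k = m * m^(k-1) := by
          rw [← pow_succ']
          congr 1
          omega
        rw [hmk]
        ring
    _ ≤ m * B^(k-1) := by
        apply mul_le_mul_of_nonneg_left _ hm'.le
        exact pow_le_pow_left₀ (div_nonneg hm'.le hn.le) hB_ge _
    _ ≤ (#(Wk G k) : ℝ) := final

end BR

theorem stmt5 (V : Type*) [Fintype V] (G : SimpleGraph V) [DecidableRel G.Adj]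
    (k : ℕ) (hk : 1 ≤ k) :
    (2 * (G.edgeFinset.card : ℝ)) ^ k / (Fintype.card V : ℝ) ^ (k - 1)
      ≤ (Nat.card {v : Fin (k + 1) → V |
          ∀ i : Fin k, G.Adj (v i.castSucc) (v i.succ)} : ℝ) := by
  classical
  have hcard : Nat.card {v : Fin (k + 1) → V |
      ∀ i : Fin k, G.Adj (v i.castSucc) (v i.succ)} = #(BR.Wk G k) := by
    rw [Nat.card_eq_fintype_card]
    exact Fintype.card_subtype _
  rw [hcard]
  exact BR.main G hk
end

section
/- Let p ≡ 3 (mod 4) be a prime, r ∈ 𝔽_p*, and E ⊆ 𝔽_p² with |E| > (√3 + 1)p. Then there exist (x₁,x₂,x₃) ∈ E³ and (y₁,y₂,y₃) ∈ E³ such that ‖yᵢ − yᵢ₊₁‖ = r‖xᵢ − xᵢ₊₁‖ for i = 1,2, and xᵢ ≠ xⱼ, yᵢ ≠ yⱼ for all i ≠ j. -/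
theorem stmt6 (p : ℕ) [Fact p.Prime] (hp4 : p % 4 = 3)
    (r : ZMod p) (hr : r ≠ 0) (E : Finset (Fin 2 → ZMod p))
    (hE : (Real.sqrt 3 + 1) * p < E.card) :
    ∃ x y : Fin 3 → (Fin 2 → ZMod p),
      (∀ i, x i ∈ E) ∧ (∀ i, y i ∈ E) ∧
      (∀ i : Fin 2, sqnorm (y i.castSucc - y i.succ) = r * sqnorm (x i.castSucc - x i.succ)) ∧
      (∀ i j, i ≠ j → x i ≠ x j ∧ y i ≠ y j) := by
  classical
  obtain ⟨c, d, hcd⟩ := ZMod.sq_add_sq p r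
  -- the similitude of ratio r
  set g : (Fin 2 → ZMod p) → (Fin 2 → ZMod p) :=
    fun v => ![c * v 0 - d * v 1, d * v 0 + c * v 1] with hg
  have hsq : ∀ v, sqnorm (g v) = r * sqnorm v := by
    intro v
    simp only [sqnorm, Fin.sum_univ_two, hg, Matrix.cons_val_zero, Matrix.cons_val_one,
      Matrix.head_cons]
    linear_combination (v 0 ^ 2 + v 1 ^ 2) * hcd
  have hsub : ∀ u v, g u - g v = g (u - v) := by
    intro u v
    funext i
    fin_cases i <;>
      simp [hg, Pi.sub_apply] <;> ring
  have hginj : Function.Injective g := by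
    intro u v h
    have h0 := congrFun h 0
    have h1 := congrFun h 1
    simp only [hg, Matrix.cons_val_zero, Matrix.cons_val_one, Matrix.head_cons] at h0 h1
    funext i
    fin_cases i
    · have : r * u 0 = r * v 0 := by
        linear_combination c * h0 + d * h1 + (v 0 - u 0) * hcd
      exact mul_left_cancel₀ hr this
    · have : r * u 1 = r * v 1 := by
        linear_combination (-d) * h0 + c * h1 + (v 1 - u 1) * hcd
      exact mul_left_cancel₀ hr this
  -- cardinality: E.card > 2p
  have hp0 : 0 < p := (Fact.out : p.Prime).pos
  have h2p : 2 * p < E.card := by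
    have h1 : (1 : ℝ) ≤ Real.sqrt 3 := by
      rw [show (1:ℝ) = Real.sqrt 1 by simp]
      exact Real.sqrt_le_sqrt (by norm_num)
    have : ((2 * p : ℕ) : ℝ) < (E.card : ℝ) := by
      push_cast
      nlinarith [hE, (by positivity : (0:ℝ) ≤ (p:ℝ))]
    exact_mod_cast this
  have hcard : (Finset.univ : Finset (Fin 2 → ZMod p)).card * 2 < (E ×ˢ E).card := by
    rw [Finset.card_univ, Finset.card_product]
    have : Fintype.card (Fin 2 → ZMod p) = p ^ 2 := by
      simp [ZMod.card]
    rw [this]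
    nlinarith [h2p]
  obtain ⟨b, -, hb⟩ := Finset.exists_lt_card_fiber_of_mul_lt_card_of_maps_to
    (f := fun a : (Fin 2 → ZMod p) × (Fin 2 → ZMod p) => a.1 - g a.2)
    (fun a _ => Finset.mem_univ _) hcard
  rw [Finset.two_lt_card_iff] at hb
  obtain ⟨a1, a2, a3, h1, h2, h3, h12, h13, h23⟩ := hb
  simp only [Finset.mem_filter, Finset.mem_product] at h1 h2 h3
  obtain ⟨⟨h1E, h1E'⟩, h1b⟩ := h1
  obtain ⟨⟨h2E, h2E'⟩, h2b⟩ := h2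
  obtain ⟨⟨h3E, h3E'⟩, h3b⟩ := h3
  -- distinctness of components
  have key : ∀ u v : (Fin 2 → ZMod p) × (Fin 2 → ZMod p),
      u.1 - g u.2 = b → v.1 - g v.2 = b → u ≠ v → u.1 ≠ v.1 ∧ u.2 ≠ v.2 := by
    intro u v hu hv huv
    have huv1 : u.1 = b + g u.2 := by rw [← hu]; ring
    have hvv1 : v.1 = b + g v.2 := by rw [← hv]; ring
    constructor
    · intro h
      apply huv
      have : g u.2 = g v.2 := by
        have := huv1 ▸ hvv1 ▸ h
        exact add_left_cancel this
      exact Prod.ext h (hginj this)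
    · intro h
      apply huv
      have : u.1 = v.1 := by rw [huv1, hvv1, h]
      exact Prod.ext this h
  have d12 := key a1 a2 h1b h2b h12
  have d13 := key a1 a3 h1b h3b h13
  have d23 := key a2 a3 h2b h3b h23
  -- the norm relation for any two fiber elements
  have hnorm : ∀ u v : (Fin 2 → ZMod p) × (Fin 2 → ZMod p),
      u.1 - g u.2 = b → v.1 - g v.2 = b → sqnorm (u.1 - v.1) = r * sqnorm (u.2 - v.2) := by
    intro u v hu hv
    have h' : u.1 - v.1 = g (u.2 - v.2) := by
      rw [← hsub]
      have huv1 : u.1 = b + g u.2 := by rw [← hu]; ring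
      have hvv1 : v.1 = b + g v.2 := by rw [← hv]; ring
      rw [huv1, hvv1]; ring
    rw [h', hsq]
  refine ⟨![a1.2, a2.2, a3.2], ![a1.1, a2.1, a3.1], ?_, ?_, ?_, ?_⟩
  · intro i; fin_cases i <;> simpa using ‹_›
  · intro i; fin_cases i <;> simpa using ‹_›
  · intro i
    fin_cases i
    · simpa using hnorm a1 a2 h1b h2b
    · simpa using hnorm a2 a3 h2b h3b
  · intro i j hij
    fin_cases i <;> fin_cases j <;>
      simp only [Matrix.cons_val_zero, Matrix.cons_val_one, Matrix.head_cons,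
        Matrix.cons_val_two, Matrix.tail_cons] <;>
      first
        | exact absurd rfl hij
        | exact ⟨d12.2, d12.1⟩
        | exact ⟨d13.2, d13.1⟩
        | exact ⟨d23.2, d23.1⟩
        | exact ⟨(d12.2).symm, (d12.1).symm⟩
        | exact ⟨(d13.2).symm, (d13.1).symm⟩
        | exact ⟨(d23.2).symm, (d23.1).symm⟩
end

section
/- Let p ≡ 3 (mod 4) be a prime, r ∈ 𝔽_p*, and E ⊆ 𝔽_p² with |E| > 4√3 · p^{3/2}. Then there exist (x₁,x₂,x₃,x₄) ∈ E⁴ and (y₁,y₂,y₃,y₄) ∈ E⁴ with xᵢ ≠ xⱼ and yᵢ ≠ yⱼ for i ≠ j, such that ‖yᵢ − yᵢ₊₁‖ = r‖xᵢ − xᵢ₊₁‖ for i = 1,2,3 and ‖y₄ − y₁‖ = r‖x₄ − x₁‖. -/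
/-- "Complex multiplication" by (a, b) on `(ZMod p)²`. -/
def cmul {p : ℕ} (a b : ZMod p) (z : Fin 2 → ZMod p) : Fin 2 → ZMod p :=
  ![a * z 0 - b * z 1, b * z 0 + a * z 1]

lemma sqnorm_two {p : ℕ} (z : Fin 2 → ZMod p) : sqnorm z = z 0 ^ 2 + z 1 ^ 2 := by
  simp [sqnorm, Fin.sum_univ_two]

lemma sqnorm_cmul {p : ℕ} (a b : ZMod p) (z : Fin 2 → ZMod p) :
    sqnorm (cmul a b z) = (a ^ 2 + b ^ 2) * sqnorm z := by
  simp only [sqnorm_two, cmul, Matrix.cons_val_zero, Matrix.cons_val_one, Matrix.head_cons]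
  ring

lemma cmul_sub {p : ℕ} (a b : ZMod p) (u v : Fin 2 → ZMod p) :
    cmul a b u - cmul a b v = cmul a b (u - v) := by
  funext i
  fin_cases i <;>
    simp [cmul, Pi.sub_apply] <;> ring

lemma cmul_inj {p : ℕ} {a b r : ZMod p} [Fact p.Prime] (hr : r ≠ 0)
    (hab : a ^ 2 + b ^ 2 = r)
    {u v : Fin 2 → ZMod p} (h : cmul a b u = cmul a b v) : u = v := by
  have h0 := congrFun h 0
  have h1 := congrFun h 1
  simp only [cmul, Matrix.cons_val_zero, Matrix.cons_val_one, Matrix.head_cons] at h0 h1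
  have e0 : u 0 = v 0 :=
    mul_left_cancel₀ hr (by linear_combination a * h0 + b * h1 - (u 0 - v 0) * hab)
  have e1 : u 1 = v 1 :=
    mul_left_cancel₀ hr (by linear_combination (-b) * h0 + a * h1 - (u 1 - v 1) * hab)
  funext i
  fin_cases i
  · exact e0
  · exact e1

set_option maxRecDepth 4000 in
theorem stmt7 (p : ℕ) [Fact p.Prime] (hp4 : p % 4 = 3)
    (r : ZMod p) (hr : r ≠ 0) (E : Finset (Fin 2 → ZMod p))
    (hE : 4 * Real.sqrt 3 * (p : ℝ) ^ ((3 : ℝ) / 2) < E.card) :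
    ∃ x y : Fin 4 → (Fin 2 → ZMod p),
      (∀ i, x i ∈ E) ∧ (∀ i, y i ∈ E) ∧
      (∀ i : Fin 3, sqnorm (y i.castSucc - y i.succ) = r * sqnorm (x i.castSucc - x i.succ)) ∧
      sqnorm (y 3 - y 0) = r * sqnorm (x 3 - x 0) ∧
      (∀ i j, i ≠ j → x i ≠ x j ∧ y i ≠ y j) := by
  classical
  obtain ⟨a, b, hab⟩ := ZMod.sq_add_sq p r
  have hp : p.Prime := Fact.out
  set c : (Fin 2 → ZMod p) → (Fin 2 → ZMod p) := cmul a b with hc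
  -- double counting
  have hsum : ∑ w : Fin 2 → ZMod p, (E.filter (fun x => c x + w ∈ E)).card
      = E.card * E.card := by
    have inner : ∀ z : Fin 2 → ZMod p,
        (∑ w : Fin 2 → ZMod p, if c z + w ∈ E then 1 else 0) = E.card := by
      intro z
      have := Fintype.sum_equiv (Equiv.addLeft (c z))
        (fun w : Fin 2 → ZMod p => if c z + w ∈ E then (1 : ℕ) else 0)
        (fun w : Fin 2 → ZMod p => if w ∈ E then (1 : ℕ) else 0)
        (fun w => rfl)
      rw [this]
      simp only [Finset.sum_ite_mem, Finset.univ_inter, Finset.sum_const, smul_eq_mul,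
        mul_one]
    calc ∑ w : Fin 2 → ZMod p, (E.filter (fun x => c x + w ∈ E)).card
        = ∑ w : Fin 2 → ZMod p, ∑ z ∈ E, if c z + w ∈ E then 1 else 0 :=
          Finset.sum_congr rfl fun w _ => Finset.card_filter _ _
      _ = ∑ z ∈ E, ∑ w : Fin 2 → ZMod p, if c z + w ∈ E then 1 else 0 :=
          Finset.sum_comm
      _ = ∑ _z ∈ E, E.card := Finset.sum_congr rfl (fun z _ => inner z)
      _ = E.card * E.card := by simp [mul_comm]
  -- |E| > 2p
  have hcard2 : 2 * p < E.card := by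
    have h1 : (1 : ℝ) ≤ Real.sqrt 3 := by
      rw [show (1 : ℝ) = Real.sqrt 1 by simp]
      exact Real.sqrt_le_sqrt (by norm_num)
    have hp1 : (1 : ℝ) ≤ (p : ℝ) := by exact_mod_cast hp.one_lt.le
    have h2 : (p : ℝ) ≤ (p : ℝ) ^ ((3 : ℝ) / 2) := by
      calc (p : ℝ) = (p : ℝ) ^ (1 : ℝ) := (Real.rpow_one _).symm
        _ ≤ (p : ℝ) ^ ((3 : ℝ) / 2) :=
          Real.rpow_le_rpow_of_exponent_le hp1 (by norm_num)
    have hps : (0 : ℝ) ≤ (p : ℝ) ^ ((3 : ℝ) / 2) := Real.rpow_nonneg (by positivity) _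
    have : (2 * p : ℝ) < (E.card : ℝ) := by nlinarith
    exact_mod_cast this
  -- pigeonhole : some w works for at least 4 points
  have hex : ∃ w : Fin 2 → ZMod p, 4 ≤ (E.filter (fun x => c x + w ∈ E)).card := by
    by_contra hcon
    push_neg at hcon
    have hb : E.card * E.card ≤ 3 * p ^ 2 := by
      rw [← hsum]
      calc ∑ w : Fin 2 → ZMod p, (E.filter (fun x => c x + w ∈ E)).card
          ≤ ∑ _w : Fin 2 → ZMod p, 3 :=
            Finset.sum_le_sum (fun w _ => by have := hcon w; omega)
        _ = 3 * p ^ 2 := by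
            simp [Finset.card_univ, Fintype.card_fun, ZMod.card, mul_comm]
    nlinarith
  obtain ⟨w, hw⟩ := hex
  obtain ⟨t, hts, htc⟩ := Finset.exists_subset_card_eq hw
  let e : Fin 4 ≃ t := ((t.equivFin).trans (finCongr htc)).symm
  set x : Fin 4 → (Fin 2 → ZMod p) := fun i => ((e i : t) : Fin 2 → ZMod p) with hx
  have hxmem : ∀ i, x i ∈ E.filter (fun z => c z + w ∈ E) := fun i => hts (e i).2
  have hxE : ∀ i, x i ∈ E := fun i => (Finset.mem_filter.mp (hxmem i)).1
  have hxcE : ∀ i, c (x i) + w ∈ E := fun i => (Finset.mem_filter.mp (hxmem i)).2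
  have hxinj : Function.Injective x := by
    intro i j hij
    exact e.injective (Subtype.ext hij)
  set y : Fin 4 → (Fin 2 → ZMod p) := fun i => c (x i) + w with hy
  have key : ∀ i j : Fin 4, sqnorm (y i - y j) = r * sqnorm (x i - x j) := by
    intro i j
    have h1 : y i - y j = cmul a b (x i - x j) := by
      rw [← cmul_sub]
      simp [hy, hc]
    rw [h1, sqnorm_cmul, hab]
  refine ⟨x, y, hxE, fun i => hxcE i, fun i => key _ _, key _ _, ?_⟩
  intro i j hij
  constructor
  · exact fun h => hij (hxinj h)
  · intro h
    apply hij
    apply hxinj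
    exact cmul_inj hr hab (by simpa [hy] using h)
end

section
/- Let p be an odd prime, r a nonzero quadratic residue in 𝔽_p, and E ⊆ 𝔽_p² with |E| ≥ 3p. Then there exist (x₁,x₂,x₃) ∈ E³ and (y₁,y₂,y₃) ∈ E³ with xᵢ ≠ xⱼ and yᵢ ≠ yⱼ for i ≠ j, such that ‖yᵢ − yᵢ₊₁‖ = r‖xᵢ − xᵢ₊₁‖ for i = 1,2 and ‖y₃ − y₁‖ = r‖x₃ − x₁‖. -/
theorem stmt8 (p : ℕ) [Fact p.Prime] (hodd : Odd p)
    (r : ZMod p) (hr : r ≠ 0) (hsq : IsSquare r)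
    (E : Finset (Fin 2 → ZMod p)) (hE : 3 * p ≤ E.card) :
    ∃ x y : Fin 3 → (Fin 2 → ZMod p),
      (∀ i, x i ∈ E) ∧ (∀ i, y i ∈ E) ∧
      (∀ i : Fin 2, sqnorm (y i.castSucc - y i.succ) = r * sqnorm (x i.castSucc - x i.succ)) ∧
      sqnorm (y 2 - y 0) = r * sqnorm (x 2 - x 0) ∧
      (∀ i j, i ≠ j → x i ≠ x j ∧ y i ≠ y j) := by
  obtain ⟨c, hc⟩ := hsq
  have hc0 : c ≠ 0 := by
    rintro rfl
    apply hr
    rw [hc, mul_zero]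
  have hp : 0 < p := (Fact.out : p.Prime).pos
  -- counting: some translate works
  have htot : ∑ t : Fin 2 → ZMod p, (E.filter (fun a => c • a + t ∈ E)).card
      = E.card * E.card := by
    have h1 : ∀ t : Fin 2 → ZMod p,
        (E.filter (fun a => c • a + t ∈ E)).card
          = ∑ a ∈ E, if c • a + t ∈ E then 1 else 0 := by
      intro t; rw [Finset.card_filter]
    simp only [h1]
    rw [Finset.sum_comm]
    have h2 : ∀ a : Fin 2 → ZMod p,
        (∑ t : Fin 2 → ZMod p, if c • a + t ∈ E then 1 else 0) = E.card := by
      intro a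
      rw [← Finset.card_filter]
      have h3 : (Finset.univ.filter (fun t : Fin 2 → ZMod p => c • a + t ∈ E))
          = E.image (fun e => e - c • a) := by
        ext t
        simp only [Finset.mem_filter, Finset.mem_univ, true_and, Finset.mem_image]
        constructor
        · intro h
          exact ⟨c • a + t, h, by abel⟩
        · rintro ⟨e, he, rfl⟩
          have : c • a + (e - c • a) = e := by abel
          rwa [this]
      rw [h3, Finset.card_image_of_injective _ sub_left_injective]
    calc (∑ a ∈ E, ∑ t : Fin 2 → ZMod p, if c • a + t ∈ E then 1 else 0)
        = ∑ a ∈ E, E.card := Finset.sum_congr rfl (fun a _ => h2 a)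
      _ = E.card * E.card := by rw [Finset.sum_const, smul_eq_mul]
  have hcardu : Fintype.card (Fin 2 → ZMod p) = p ^ 2 := by
    rw [Fintype.card_fun, ZMod.card, Fintype.card_fin]
  have key : ∃ t : Fin 2 → ZMod p, 2 < (E.filter (fun a => c • a + t ∈ E)).card := by
    have hlt : (∑ _t : Fin 2 → ZMod p, 2)
        < ∑ t : Fin 2 → ZMod p, (E.filter (fun a => c • a + t ∈ E)).card := by
      rw [htot, Finset.sum_const, smul_eq_mul, ← Fintype.card, hcardu]
      nlinarith [hE, hp]
    obtain ⟨t, _, ht⟩ := Finset.exists_lt_of_sum_lt hlt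
    exact ⟨t, ht⟩
  obtain ⟨t, ht⟩ := key
  rw [Finset.two_lt_card_iff] at ht
  obtain ⟨a, b, d, ha, hb, hd, hab, had, hbd⟩ := ht
  rw [Finset.mem_filter] at ha hb hd
  set x : Fin 3 → (Fin 2 → ZMod p) := ![a, b, d] with hxdef
  set y : Fin 3 → (Fin 2 → ZMod p) := fun i => c • x i + t with hydef
  have hscale : ∀ i j : Fin 3, sqnorm (y i - y j) = r * sqnorm (x i - x j) := by
    intro i j
    have h1 : y i - y j = c • (x i - x j) := by
      rw [hydef]; simp only [smul_sub]; abel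
    rw [h1]
    unfold sqnorm
    rw [Finset.mul_sum]
    refine Finset.sum_congr rfl fun k _ => ?_
    rw [Pi.smul_apply, smul_eq_mul, hc]
    ring
  have hxne : ∀ i j : Fin 3, i ≠ j → x i ≠ x j := by
    intro i j hij
    fin_cases i <;> fin_cases j <;>
      simp_all [hxdef, Matrix.cons_val_zero, Matrix.cons_val_one] <;>
      first
        | exact hab | exact had | exact hbd
        | exact fun h => hab h.symm | exact fun h => had h.symm
        | exact fun h => hbd h.symm
  have hyne : ∀ i j : Fin 3, i ≠ j → y i ≠ y j := by
    intro i j hij hcon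
    apply hxne i j hij
    have h2 : c • x i = c • x j := add_right_cancel hcon
    exact smul_right_injective _ hc0 h2
  refine ⟨x, y, ?_, ?_, ?_, ?_, ?_⟩
  · intro i
    fin_cases i <;> simp [hxdef] <;> [exact ha.1; exact hb.1; exact hd.1]
  · intro i
    fin_cases i <;> simp [hydef, hxdef] <;> [exact ha.2; exact hb.2; exact hd.2]
  · intro i; exact hscale _ _
  · exact hscale 2 0
  · intro i j hij; exact ⟨hxne i j hij, hyne i j hij⟩
end

section
/- Let p be an odd prime, d ≥ 2, r a nonzero quadratic residue in 𝔽_p, and E ⊆ 𝔽_p^d with |E| ≥ (d+1) p^{d/2}. Then there exist (x₁, …, x_{d+1}) ∈ E^{d+1} and (y₁, …, y_{d+1}) ∈ E^{d+1} with xᵢ ≠ xⱼ and yᵢ ≠ yⱼ for i ≠ j, such that ‖yᵢ − yⱼ‖ = r‖xᵢ − xⱼ‖ for all i, j ∈ [d+1]. -/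
theorem stmt9 (p : ℕ) [Fact p.Prime] (hodd : Odd p) (d : ℕ) (hd : 2 ≤ d)
    (r : ZMod p) (hr : r ≠ 0) (hsq : IsSquare r)
    (E : Finset (Fin d → ZMod p))
    (hE : ((d : ℝ) + 1) * (p : ℝ) ^ ((d : ℝ) / 2) ≤ E.card) :
    ∃ x y : Fin (d + 1) → (Fin d → ZMod p),
      (∀ i, x i ∈ E) ∧ (∀ i, y i ∈ E) ∧
      (∀ i j, sqnorm (y i - y j) = r * sqnorm (x i - x j)) ∧
      (∀ i j, i ≠ j → x i ≠ x j ∧ y i ≠ y j) := by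
  classical
  obtain ⟨s, hs⟩ := hsq
  have hs0 : s ≠ 0 := by rintro rfl; simp at hs; exact hr hs
  have hp0 : 0 < p := (Fact.out : p.Prime).pos
  have hcard : Fintype.card (Fin d → ZMod p) = p ^ d := by
    rw [Fintype.card_fun, ZMod.card, Fintype.card_fin]
  set F : (Fin d → ZMod p) → Finset (Fin d → ZMod p) :=
    fun t => E.filter (fun b => s⁻¹ • (b - t) ∈ E) with hF
  -- double counting
  have hsum : ∑ t : (Fin d → ZMod p), (F t).card = E.card * E.card := by
    have h1 : ∀ t, (F t).card = ∑ b ∈ E, (if s⁻¹ • (b - t) ∈ E then 1 else 0) := by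
      intro t; simp only [hF, Finset.card_filter]
    simp only [h1]
    rw [Finset.sum_comm]
    have h2 : ∀ b ∈ E, (∑ t : (Fin d → ZMod p), if s⁻¹ • (b - t) ∈ E then 1 else 0)
        = E.card := by
      intro b _
      rw [← Finset.card_filter]
      have himg : (Finset.univ.filter (fun t => s⁻¹ • (b - t) ∈ E))
          = E.image (fun a => b - s • a) := by
        ext t
        simp only [Finset.mem_filter, Finset.mem_univ, true_and, Finset.mem_image]
        constructor
        · intro h
          refine ⟨s⁻¹ • (b - t), h, ?_⟩
          rw [smul_smul, mul_inv_cancel₀ hs0, one_smul]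
          abel
        · rintro ⟨a, ha, rfl⟩
          simpa [smul_smul, inv_mul_cancel₀ hs0] using ha
      rw [himg, Finset.card_image_of_injective]
      intro a b hab
      exact smul_right_injective _ hs0 (sub_right_injective hab)
    rw [Finset.sum_congr rfl h2, Finset.sum_const, smul_eq_mul]
  -- lower bound
  have hE2 : (d + 1) * p ^ d ≤ E.card * E.card := by
    have hpR : (0:ℝ) < (p:ℝ) := by exact_mod_cast hp0
    have hhalf : (p:ℝ) ^ ((d:ℝ)/2) * (p:ℝ) ^ ((d:ℝ)/2) = (p:ℝ) ^ (d:ℕ) := by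
      rw [← Real.rpow_add hpR]
      rw [show (d:ℝ)/2 + (d:ℝ)/2 = (d:ℝ) by ring, Real.rpow_natCast]
    have h0 : (0:ℝ) ≤ ((d:ℝ) + 1) * (p:ℝ) ^ ((d:ℝ)/2) := by positivity
    have hsq2 : (((d:ℝ) + 1) * (p:ℝ) ^ ((d:ℝ)/2)) * (((d:ℝ) + 1) * (p:ℝ) ^ ((d:ℝ)/2))
        ≤ (E.card : ℝ) * E.card := mul_le_mul hE hE h0 (Nat.cast_nonneg _)
    have hP : (0:ℝ) ≤ (p:ℝ) ^ (d:ℕ) := by positivity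
    have hdR : (1:ℝ) ≤ (d:ℝ) + 1 := by
      have : (0:ℝ) ≤ (d:ℝ) := Nat.cast_nonneg d
      linarith
    have e1 : (((d:ℝ) + 1) * (p:ℝ) ^ ((d:ℝ)/2)) * (((d:ℝ) + 1) * (p:ℝ) ^ ((d:ℝ)/2))
        = ((d:ℝ)+1) * ((d:ℝ)+1) * ((p:ℝ) ^ (d:ℕ)) := by rw [← hhalf]; ring
    rw [e1] at hsq2
    have key : ((d:ℝ) + 1) * (p:ℝ) ^ (d:ℕ) ≤ (E.card : ℝ) * E.card := by
      nlinarith [hsq2, hP, hdR]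
    exact_mod_cast key
  -- pigeonhole
  have hex : ∃ t, d + 1 ≤ (F t).card := by
    by_contra h
    push_neg at h
    have hle : ∑ t : (Fin d → ZMod p), (F t).card ≤ ∑ _t : (Fin d → ZMod p), d :=
      Finset.sum_le_sum (fun t _ => Nat.lt_succ_iff.mp (h t))
    rw [hsum, Finset.sum_const, Finset.card_univ, hcard, smul_eq_mul] at hle
    have hpd : 0 < p ^ d := pow_pos hp0 d
    nlinarith [hE2, hle, hpd]
  obtain ⟨t, ht⟩ := hex
  obtain ⟨S, hSsub, hScard⟩ := Finset.exists_subset_card_eq ht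
  -- build y
  set y : Fin (d + 1) → (Fin d → ZMod p) :=
    fun i => (S.equivFin.symm (Fin.cast hScard.symm i) : Fin d → ZMod p) with hy
  have hyS : ∀ i, y i ∈ S := fun i => (S.equivFin.symm (Fin.cast hScard.symm i)).2
  have hyinj : Function.Injective y := by
    intro i j hij
    have : S.equivFin.symm (Fin.cast hScard.symm i) = S.equivFin.symm (Fin.cast hScard.symm j) :=
      Subtype.ext hij
    have := S.equivFin.symm.injective this
    simpa [Fin.ext_iff] using congrArg Fin.val this
  set x : Fin (d + 1) → (Fin d → ZMod p) := fun i => s⁻¹ • (y i - t) with hx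
  have hyF : ∀ i, y i ∈ F t := fun i => hSsub (hyS i)
  have hyE : ∀ i, y i ∈ E := fun i => (Finset.mem_filter.mp (hyF i)).1
  have hxE : ∀ i, x i ∈ E := fun i => (Finset.mem_filter.mp (hyF i)).2
  have hsx : ∀ i, s • x i = y i - t := by
    intro i
    rw [hx]
    rw [smul_smul, mul_inv_cancel₀ hs0, one_smul]
  refine ⟨x, y, hxE, hyE, ?_, ?_⟩
  · intro i j
    have hdiff : y i - y j = s • (x i - x j) := by
      rw [smul_sub, hsx, hsx]; abel
    rw [hdiff]
    simp only [sqnorm, Pi.smul_apply, smul_eq_mul, mul_pow, ← Finset.mul_sum, hs]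
    ring
  · intro i j hij
    have hyne : y i ≠ y j := fun h => hij (hyinj h)
    refine ⟨fun h => hyne ?_, hyne⟩
    have := congrArg (fun v => s • v) h
    simp only [hsx] at this
    exact sub_left_injective this
end

section
/- Let p ≡ 3 (mod 4) be a prime, r ∈ 𝔽_p*, k ≥ 1, and E ⊆ 𝔽_p² with |E| > 2p. Then |{(x₁,…,x_{k+1},y₁,…,y_{k+1}) ∈ E^{2k+2} : ‖yᵢ − yᵢ₊₁‖ = r‖xᵢ − xᵢ₊₁‖ and xᵢ ≠ xᵢ₊₁ for all i ∈ [k]}| > |E|^{2k+2} / (3p)^k. -/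
namespace Stmt10

open Matrix

variable {p : ℕ}

abbrev Pt (p : ℕ) := Fin 2 → ZMod p
abbrev Vx (p : ℕ) := Pt p × Pt p

def cmul (γ : ZMod p × ZMod p) (z : Pt p) : Pt p :=
  ![γ.1 * z 0 - γ.2 * z 1, γ.2 * z 0 + γ.1 * z 1]

lemma sqnorm_two (z : Pt p) : sqnorm z = z 0 ^ 2 + z 1 ^ 2 := by
  simp [sqnorm, Fin.sum_univ_two]

lemma sqnorm_cmul (γ : ZMod p × ZMod p) (z : Pt p) :
    sqnorm (cmul γ z) = (γ.1 ^ 2 + γ.2 ^ 2) * sqnorm z := by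
  simp [sqnorm_two, cmul]; ring

lemma cmul_sub (γ : ZMod p × ZMod p) (z w : Pt p) :
    cmul γ (z - w) = cmul γ z - cmul γ w := by
  funext i; fin_cases i <;> simp [cmul] <;> ring

lemma cmul_zero (γ : ZMod p × ZMod p) : cmul γ (0 : Pt p) = 0 := by
  funext i; fin_cases i <;> simp [cmul]

lemma sqnorm_sub_comm (z w : Pt p) : sqnorm (z - w) = sqnorm (w - z) := by
  simp [sqnorm_two]; ring

lemma sqnorm_ne_zero [Fact p.Prime] (hp4 : p % 4 = 3) {z : Pt p} (hz : z ≠ 0) :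
    sqnorm z ≠ 0 := by
  rw [sqnorm_two]
  intro h
  have hns : ¬ IsSquare (-1 : ZMod p) := by
    rw [ZMod.exists_sq_eq_neg_one_iff]; simp [hp4]
  have h1 : z 1 ≠ 0 := by
    intro h1
    have h0 : z 0 = 0 := by
      rw [h1] at h; simpa [pow_eq_zero_iff] using h
    apply hz; funext i; fin_cases i <;> simp [h0, h1]
  apply hns
  refine ⟨z 0 / z 1, ?_⟩
  field_simp
  linear_combination -h

lemma cmul_inj [Fact p.Prime] {γ γ' : ZMod p × ZMod p} {z : Pt p} (hz : sqnorm z ≠ 0)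
    (h : cmul γ z = cmul γ' z) : γ = γ' := by
  rw [sqnorm_two] at hz
  have h0 := congrFun h 0
  have h1 := congrFun h 1
  simp [cmul] at h0 h1
  have e1 : (γ.1 - γ'.1) * (z 0 ^ 2 + z 1 ^ 2) = 0 := by
    linear_combination (z 0) * h0 + (z 1) * h1
  have e2 : (γ.2 - γ'.2) * (z 0 ^ 2 + z 1 ^ 2) = 0 := by
    linear_combination (z 0) * h1 - (z 1) * h0
  have f1 : γ.1 = γ'.1 := by
    rcases mul_eq_zero.mp e1 with h' | h'
    · exact sub_eq_zero.mp h'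
    · exact absurd h' hz
  have f2 : γ.2 = γ'.2 := by
    rcases mul_eq_zero.mp e2 with h' | h'
    · exact sub_eq_zero.mp h'
    · exact absurd h' hz
  exact Prod.ext f1 f2

lemma exists_cmul [Fact p.Prime] {z w : Pt p} {r : ZMod p}
    (hn : sqnorm z ≠ 0) (hw : sqnorm w = r * sqnorm z) :
    ∃ γ : ZMod p × ZMod p, γ.1 ^ 2 + γ.2 ^ 2 = r ∧ cmul γ z = w := by
  simp only [sqnorm_two] at hn hw
  refine ⟨⟨(w 0 * z 0 + w 1 * z 1) / (z 0 ^ 2 + z 1 ^ 2),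
          (w 1 * z 0 - w 0 * z 1) / (z 0 ^ 2 + z 1 ^ 2)⟩, ?_, ?_⟩
  · field_simp
    linear_combination (z 0 ^ 2 + z 1 ^ 2) * hw
  · funext i
    fin_cases i <;> simp [cmul] <;> field_simp <;> ring

def Circ (p : ℕ) [Fact p.Prime] (r : ZMod p) : Finset (ZMod p × ZMod p) :=
  Finset.univ.filter (fun γ => γ.1 ^ 2 + γ.2 ^ 2 = r)

section
variable [Fact p.Prime] (hp4 : p % 4 = 3)

lemma mem_Circ {r : ZMod p} {γ : ZMod p × ZMod p} :
    γ ∈ Circ p r ↔ γ.1 ^ 2 + γ.2 ^ 2 = r := by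
  simp [Circ]

include hp4

lemma neg_one_not_square : ¬ IsSquare (-1 : ZMod p) := by
  rw [ZMod.exists_sq_eq_neg_one_iff]; simp [hp4]

lemma two_ne_zero' : (2 : ZMod p) ≠ 0 := by
  intro h
  have h2 : ((2 : ℕ) : ZMod p) = 0 := by push_cast; exact h
  rw [ZMod.natCast_eq_zero_iff] at h2
  have := Nat.le_of_dvd (by norm_num) h2
  omega

lemma one_add_sq_ne_zero (t : ZMod p) : 1 + t ^ 2 ≠ 0 := by
  intro h
  exact neg_one_not_square hp4 ⟨t, by linear_combination -h⟩

end

noncomputable def stereo (p : ℕ) [Fact p.Prime] : Option (ZMod p) → ZMod p × ZMod p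
  | none => (-1, 0)
  | some t => ((1 - t ^ 2) / (1 + t ^ 2), 2 * t / (1 + t ^ 2))

section
variable [Fact p.Prime] (hp4 : p % 4 = 3)
include hp4

lemma stereo_injective : Function.Injective (stereo p) := by
  intro a b hab
  match a, b with
  | none, none => rfl
  | none, some t =>
      exfalso
      have h1 : (-1 : ZMod p) = (1 - t ^ 2) / (1 + t ^ 2) := congrArg Prod.fst hab
      have ht := one_add_sq_ne_zero hp4 t
      rw [eq_div_iff ht] at h1
      exact two_ne_zero' hp4 (by linear_combination -h1)
  | some t, none =>
      exfalso
      have h1 : (1 - t ^ 2) / (1 + t ^ 2) = (-1 : ZMod p) := congrArg Prod.fst hab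
      have ht := one_add_sq_ne_zero hp4 t
      rw [div_eq_iff ht] at h1
      exact two_ne_zero' hp4 (by linear_combination h1)
  | some t, some s =>
      have ht := one_add_sq_ne_zero hp4 t
      have hs := one_add_sq_ne_zero hp4 s
      have h1 : (1 - t ^ 2) / (1 + t ^ 2) = (1 - s ^ 2) / (1 + s ^ 2) :=
        congrArg Prod.fst hab
      have h2 : 2 * t / (1 + t ^ 2) = 2 * s / (1 + s ^ 2) := congrArg Prod.snd hab
      rw [div_eq_div_iff ht hs] at h1 h2
      have e1 : (2 : ZMod p) * (s ^ 2 - t ^ 2) = 0 := by linear_combination h1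
      have hsq : s ^ 2 = t ^ 2 :=
        sub_eq_zero.mp ((mul_eq_zero.mp e1).resolve_left (two_ne_zero' hp4))
      have e2 : (2 : ZMod p) * ((t - s) * (1 - t * s)) = 0 := by linear_combination h2
      have e2' := (mul_eq_zero.mp e2).resolve_left (two_ne_zero' hp4)
      have hst : (s - t) * (s + t) = 0 := by linear_combination hsq
      rcases mul_eq_zero.mp hst with h | h
      · exact congrArg some (sub_eq_zero.mp h).symm
      · rcases mul_eq_zero.mp e2' with h' | h'
        · exact congrArg some (sub_eq_zero.mp h')
        · exfalso
          exact neg_one_not_square hp4 ⟨t, by linear_combination -h' - t * h⟩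

lemma image_stereo : Finset.univ.image (stereo p) = Circ p 1 := by
  ext γ
  simp only [Finset.mem_image, mem_Circ, Finset.mem_univ, true_and]
  constructor
  · rintro ⟨o, rfl⟩
    match o with
    | none => norm_num [stereo]
    | some t =>
        have ht := one_add_sq_ne_zero hp4 t
        show ((1 - t ^ 2) / (1 + t ^ 2)) ^ 2 + (2 * t / (1 + t ^ 2)) ^ 2 = 1
        field_simp
        ring
  · intro hγ
    by_cases hx : γ.1 = -1
    · have hy2 : γ.2 ^ 2 = 0 := by linear_combination hγ + (1 - γ.1) * hx
      have hy : γ.2 = 0 := by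
        simpa [pow_eq_zero_iff] using hy2
      exact ⟨none, Prod.ext hx.symm hy.symm⟩
    · have h1x : 1 + γ.1 ≠ 0 := fun h => hx (by linear_combination h)
      refine ⟨some (γ.2 / (1 + γ.1)), ?_⟩
      have ht := one_add_sq_ne_zero hp4 (γ.2 / (1 + γ.1))
      show ((1 - _ ^ 2) / (1 + _ ^ 2), 2 * _ / (1 + _ ^ 2)) = γ
      apply Prod.ext
      · show (1 - (γ.2 / (1 + γ.1)) ^ 2) / (1 + (γ.2 / (1 + γ.1)) ^ 2) = γ.1
        rw [div_eq_iff ht]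
        field_simp
        linear_combination (-(1 + γ.1)) * hγ
      · show 2 * (γ.2 / (1 + γ.1)) / (1 + (γ.2 / (1 + γ.1)) ^ 2) = γ.2
        rw [div_eq_iff ht]
        field_simp
        linear_combination (-(γ.2 * (1 + γ.1)) + γ.2 * γ.1) * hγ

lemma card_Circ_one : (Circ p 1).card = p + 1 := by
  rw [← image_stereo hp4, Finset.card_image_of_injective _ (stereo_injective hp4),
    Finset.card_univ]
  simp [ZMod.card]

lemma card_Circ {r : ZMod p} (hr : r ≠ 0) : (Circ p r).card = p + 1 := by
  obtain ⟨a, b, hab⟩ := ZMod.sq_add_sq p r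
  have hinj : Function.Injective (fun δ : ZMod p × ZMod p =>
      ((a * δ.1 - b * δ.2, a * δ.2 + b * δ.1) : ZMod p × ZMod p)) := by
    intro δ δ' h
    have h0 := congrArg Prod.fst h
    have h1 := congrArg Prod.snd h
    simp only at h0 h1
    have e1 : (δ.1 - δ'.1) * r = 0 := by
      linear_combination a * h0 + b * h1 - (δ.1 - δ'.1) * hab
    have e2 : (δ.2 - δ'.2) * r = 0 := by
      linear_combination a * h1 - b * h0 - (δ.2 - δ'.2) * hab
    exact Prod.ext (sub_eq_zero.mp ((mul_eq_zero.mp e1).resolve_right hr))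
      (sub_eq_zero.mp ((mul_eq_zero.mp e2).resolve_right hr))
  have himg : (Circ p 1).image (fun δ : ZMod p × ZMod p =>
      ((a * δ.1 - b * δ.2, a * δ.2 + b * δ.1) : ZMod p × ZMod p)) = Circ p r := by
    ext γ
    simp only [Finset.mem_image, mem_Circ]
    constructor
    · rintro ⟨δ, hδ, rfl⟩
      show (a * δ.1 - b * δ.2) ^ 2 + (a * δ.2 + b * δ.1) ^ 2 = r
      linear_combination (a ^ 2 + b ^ 2) * hδ + hab
    · intro hγ
      refine ⟨((a * γ.1 + b * γ.2) / r, (a * γ.2 - b * γ.1) / r), ?_, ?_⟩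
      · show ((a * γ.1 + b * γ.2) / r) ^ 2 + ((a * γ.2 - b * γ.1) / r) ^ 2 = 1
        field_simp
        linear_combination (γ.1 ^ 2 + γ.2 ^ 2) * hab + r * hγ
      · show (a * ((a * γ.1 + b * γ.2) / r) - b * ((a * γ.2 - b * γ.1) / r),
            a * ((a * γ.2 - b * γ.1) / r) + b * ((a * γ.1 + b * γ.2) / r)) = γ
        apply Prod.ext
        · show a * ((a * γ.1 + b * γ.2) / r) - b * ((a * γ.2 - b * γ.1) / r) = γ.1
          field_simp
          linear_combination γ.1 * hab
        · show a * ((a * γ.2 - b * γ.1) / r) + b * ((a * γ.1 + b * γ.2) / r) = γ.2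
          field_simp
          linear_combination γ.2 * hab
  rw [← card_Circ_one hp4, ← himg, Finset.card_image_of_injective _ hinj]

end

section Key
variable [Fact p.Prime]

lemma key (hp4 : p % 4 = 3) {r : ZMod p} (hr : r ≠ 0) (v v' : Vx p) :
    (if (sqnorm (v.2 - v'.2) = r * sqnorm (v.1 - v'.1) ∧ v.1 ≠ v'.1) then (1:ℝ) else 0)
      = (∑ γ ∈ Circ p r, if v.2 - v'.2 = cmul γ (v.1 - v'.1) then (1:ℝ) else 0)
        - ((p : ℝ) + 1) * (if v = v' then 1 else 0) := by
  by_cases hx : v.1 = v'.1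
  · have hz : v.1 - v'.1 = 0 := sub_eq_zero.mpr hx
    rw [hz]
    have hsum : (∑ γ ∈ Circ p r, if v.2 - v'.2 = cmul γ 0 then (1:ℝ) else 0)
        = ((p : ℝ) + 1) * (if v.2 - v'.2 = 0 then 1 else 0) := by
      rw [Finset.sum_congr rfl (fun γ _ => by rw [cmul_zero]), Finset.sum_const,
        card_Circ hp4 hr]
      push_cast
      ring
    rw [hsum]
    have hiff : (v = v') ↔ (v.2 - v'.2 = 0) := by
      rw [sub_eq_zero]
      exact ⟨fun h => by rw [h], fun h => Prod.ext hx h⟩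
    rw [if_neg (fun hc : _ ∧ v.1 ≠ v'.1 => hc.2 hx), if_congr hiff rfl rfl]
    ring
  · have hzz : v.1 - v'.1 ≠ 0 := sub_ne_zero.mpr hx
    have hn := sqnorm_ne_zero hp4 hzz
    have hvv' : (if v = v' then (1:ℝ) else 0) = 0 := if_neg (fun h => hx (by rw [h]))
    rw [hvv', mul_zero, sub_zero, Finset.sum_boole]
    by_cases hcond : sqnorm (v.2 - v'.2) = r * sqnorm (v.1 - v'.1)
    · rw [if_pos ⟨hcond, hx⟩]
      obtain ⟨γ', hγ'C, hγ'⟩ := exists_cmul hn hcond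
      have hfil : (Circ p r).filter (fun γ => v.2 - v'.2 = cmul γ (v.1 - v'.1)) = {γ'} := by
        ext γ
        simp only [Finset.mem_filter, Finset.mem_singleton, mem_Circ]
        constructor
        · rintro ⟨h1, h2⟩
          exact cmul_inj hn (by rw [hγ', ← h2])
        · rintro rfl
          exact ⟨hγ'C, hγ'.symm⟩
      rw [hfil]
      simp
    · rw [if_neg (fun h : _ ∧ _ => hcond h.1)]
      have hfil : (Circ p r).filter (fun γ => v.2 - v'.2 = cmul γ (v.1 - v'.1)) = ∅ := by
        ext γ
        simp only [Finset.mem_filter, Finset.notMem_empty, iff_false, not_and, mem_Circ]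
        intro h1 h2
        exact hcond (by rw [h2, sqnorm_cmul, h1])
      rw [hfil]
      simp

end Key

section Mat
variable [Fact p.Prime]

def uI (E : Finset (Pt p)) : Vx p → ℝ := fun v => if v.1 ∈ E ∧ v.2 ∈ E then 1 else 0

def TM (E : Finset (Pt p)) (r : ZMod p) : Matrix (Vx p) (Vx p) ℝ :=
  Matrix.of fun v v' =>
    if ((v.1 ∈ E ∧ v.2 ∈ E) ∧ (v'.1 ∈ E ∧ v'.2 ∈ E) ∧
        (sqnorm (v.2 - v'.2) = r * sqnorm (v.1 - v'.1) ∧ v.1 ≠ v'.1)) then 1 else 0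

lemma dot_eq (g h : Vx p → ℝ) : g ⬝ᵥ h = ∑ v : Vx p, g v * h v := rfl

lemma mulVec_eq (M : Matrix (Vx p) (Vx p) ℝ) (g : Vx p → ℝ) (v : Vx p) :
    (M *ᵥ g) v = ∑ v' : Vx p, M v v' * g v' := rfl

lemma fiber_sq (φ : Vx p → Pt p) (G : Vx p → ℝ) :
    (∑ v : Vx p, ∑ v' : Vx p, if φ v = φ v' then G v * G v' else 0)
      = ∑ w : Pt p, (∑ v : Vx p, if φ v = w then G v else 0) ^ 2 := by
  have h2 : ∀ v v' : Vx p, (if φ v = φ v' then G v * G v' else 0)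
      = ∑ w : Pt p, (if φ v = w then G v else 0) * (if φ v' = w then G v' else 0) := by
    intro v v'
    rw [Finset.sum_eq_single (φ v)]
    · by_cases h : φ v = φ v'
      · rw [if_pos h, if_pos rfl, if_pos h.symm]
      · rw [if_neg h, if_pos rfl, if_neg (fun hh => h hh.symm), mul_zero]
    · intro w _ hw
      rw [if_neg (fun hh => hw hh.symm), zero_mul]
    · intro h
      exact absurd (Finset.mem_univ _) h
  rw [Finset.sum_congr rfl fun v _ => Finset.sum_congr rfl fun v' _ => h2 v v']
  rw [Finset.sum_congr rfl fun v (_ : v ∈ Finset.univ) => Finset.sum_comm]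
  rw [Finset.sum_comm]
  refine Finset.sum_congr rfl fun w _ => ?_
  rw [sq, Finset.sum_mul_sum]

lemma quad_decomp (hp4 : p % 4 = 3) {r : ZMod p} (hr : r ≠ 0) (E : Finset (Pt p))
    (g : Vx p → ℝ) :
    g ⬝ᵥ (TM E r *ᵥ g)
      = (∑ γ ∈ Circ p r, ∑ w : Pt p,
          (∑ v : Vx p, if v.2 - cmul γ v.1 = w then uI E v * g v else 0) ^ 2)
        - ((p : ℝ) + 1) * (∑ v : Vx p, (uI E v * g v) ^ 2) := by
  have step1 : g ⬝ᵥ (TM E r *ᵥ g)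
      = ∑ v : Vx p, ∑ v' : Vx p,
          (if (sqnorm (v.2 - v'.2) = r * sqnorm (v.1 - v'.1) ∧ v.1 ≠ v'.1) then (1:ℝ) else 0)
            * ((uI E v * g v) * (uI E v' * g v')) := by
    rw [dot_eq]
    refine Finset.sum_congr rfl fun v _ => ?_
    rw [mulVec_eq, Finset.mul_sum]
    refine Finset.sum_congr rfl fun v' _ => ?_
    show g v * (TM E r v v' * g v') = _
    by_cases h1 : v.1 ∈ E ∧ v.2 ∈ E <;> by_cases h2 : v'.1 ∈ E ∧ v'.2 ∈ E <;>
      by_cases h3 : (sqnorm (v.2 - v'.2) = r * sqnorm (v.1 - v'.1) ∧ v.1 ≠ v'.1) <;>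
      simp [TM, uI, h1, h2, h3] <;>
      ring
  rw [step1]
  have step2 : ∀ v v' : Vx p,
      (if (sqnorm (v.2 - v'.2) = r * sqnorm (v.1 - v'.1) ∧ v.1 ≠ v'.1) then (1:ℝ) else 0)
            * ((uI E v * g v) * (uI E v' * g v'))
      = (∑ γ ∈ Circ p r, if v.2 - v'.2 = cmul γ (v.1 - v'.1) then
            (uI E v * g v) * (uI E v' * g v') else 0)
        - ((p : ℝ) + 1) * (if v = v' then (uI E v * g v) * (uI E v' * g v') else 0) := by
    intro v v'
    rw [key hp4 hr v v', sub_mul, Finset.sum_mul]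
    congr 1
    · exact Finset.sum_congr rfl fun γ _ => boole_mul _ _
    · rw [mul_assoc, boole_mul]
  rw [Finset.sum_congr rfl fun v _ => Finset.sum_congr rfl fun v' _ => step2 v v']
  rw [Finset.sum_congr rfl fun v (_ : v ∈ Finset.univ) => Finset.sum_sub_distrib _ _,
    Finset.sum_sub_distrib]
  have step3 : (∑ v : Vx p, ∑ v' : Vx p, ((p : ℝ) + 1) *
      (if v = v' then (uI E v * g v) * (uI E v' * g v') else 0))
      = ((p : ℝ) + 1) * (∑ v : Vx p, (uI E v * g v) ^ 2) := by
    have hrow : ∀ v : Vx p, (∑ v' : Vx p, ((p : ℝ) + 1) *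
        (if v = v' then (uI E v * g v) * (uI E v' * g v') else 0))
        = ((p : ℝ) + 1) * (uI E v * g v) ^ 2 := by
      intro v
      rw [← Finset.mul_sum]
      congr 1
      rw [Finset.sum_eq_single v]
      · rw [if_pos rfl, sq]
      · intro v' _ hv'
        rw [if_neg (fun h => hv' h.symm)]
      · intro h
        exact absurd (Finset.mem_univ _) h
    rw [Finset.sum_congr rfl fun v _ => hrow v, ← Finset.mul_sum]
  rw [step3]
  congr 1
  have step4 : (∑ v : Vx p, ∑ v' : Vx p, ∑ γ ∈ Circ p r,
      if v.2 - v'.2 = cmul γ (v.1 - v'.1) then (uI E v * g v) * (uI E v' * g v') else 0)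
      = ∑ γ ∈ Circ p r, ∑ v : Vx p, ∑ v' : Vx p,
      (if v.2 - v'.2 = cmul γ (v.1 - v'.1) then (uI E v * g v) * (uI E v' * g v') else 0) := by
    rw [Finset.sum_congr rfl fun v (_ : v ∈ Finset.univ) => Finset.sum_comm]
    rw [Finset.sum_comm]
  rw [step4]
  refine Finset.sum_congr rfl fun γ _ => ?_
  have hiffγ : ∀ v v' : Vx p, (v.2 - v'.2 = cmul γ (v.1 - v'.1))
      ↔ (v.2 - cmul γ v.1 = v'.2 - cmul γ v'.1) := by
    intro v v'
    rw [cmul_sub]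
    exact sub_eq_sub_iff_sub_eq_sub
  rw [Finset.sum_congr rfl fun v _ => Finset.sum_congr rfl fun v' _ =>
    if_congr (hiffγ v v') rfl rfl]
  exact fiber_sq (fun u => u.2 - cmul γ u.1) (fun v => uI E v * g v)

end Mat

section Bounds
variable [Fact p.Prime]

lemma uI_mul_self (E : Finset (Pt p)) (v : Vx p) : uI E v * uI E v = uI E v := by
  unfold uI; split <;> norm_num

lemma sum_uI (E : Finset (Pt p)) : (∑ v : Vx p, uI E v) = (E.card : ℝ) ^ 2 := by
  have hrow : ∀ x : Pt p, (∑ y : Pt p, if x ∈ E ∧ y ∈ E then (1:ℝ) else 0)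
      = (if x ∈ E then (1:ℝ) else 0) * (E.card : ℝ) := by
    intro x
    by_cases hx : x ∈ E
    · simp only [hx, true_and, if_true, one_mul]
      rw [Finset.sum_boole, Finset.filter_univ_mem]
    · simp [hx]
  show (∑ v : Vx p, if v.1 ∈ E ∧ v.2 ∈ E then (1:ℝ) else 0) = _
  rw [Fintype.sum_prod_type]
  rw [Finset.sum_congr rfl fun x _ => hrow x, ← Finset.sum_mul, Finset.sum_boole,
    Finset.filter_univ_mem]
  ring

lemma quad_ge (hp4 : p % 4 = 3) {r : ZMod p} (hr : r ≠ 0) (E : Finset (Pt p))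
    (g : Vx p → ℝ) :
    -(((p : ℝ) + 1) * (g ⬝ᵥ g)) ≤ g ⬝ᵥ (TM E r *ᵥ g) := by
  rw [quad_decomp hp4 hr E g]
  have h1 : (0:ℝ) ≤ ∑ γ ∈ Circ p r, ∑ w : Pt p,
      (∑ v : Vx p, if v.2 - cmul γ v.1 = w then uI E v * g v else 0) ^ 2 := by
    positivity
  have h2 : (∑ v : Vx p, (uI E v * g v) ^ 2) ≤ g ⬝ᵥ g := by
    rw [dot_eq]
    refine Finset.sum_le_sum fun v _ => ?_
    have : uI E v = 0 ∨ uI E v = 1 := by unfold uI; split <;> simp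
    rcases this with h | h <;> rw [h] <;> nlinarith [sq_nonneg (g v)]
  have hc : (0:ℝ) ≤ (p : ℝ) + 1 := by positivity
  nlinarith [mul_le_mul_of_nonneg_left h2 hc]

lemma s1_ge (hp4 : p % 4 = 3) {r : ZMod p} (hr : r ≠ 0) (E : Finset (Pt p)) :
    ((p : ℝ) + 1) * (((E.card : ℝ) ^ 2) ^ 2 / (p : ℝ) ^ 2 - (E.card : ℝ) ^ 2)
      ≤ uI E ⬝ᵥ (TM E r *ᵥ uI E) := by
  have hp0 : (0:ℝ) < (p : ℝ) := by
    have := (Fact.out : p.Prime).pos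
    exact_mod_cast this
  rw [quad_decomp hp4 hr E (uI E)]
  have huu : ∀ v : Vx p, uI E v * uI E v = uI E v := uI_mul_self E
  have h2 : (∑ v : Vx p, (uI E v * uI E v) ^ 2) = (E.card : ℝ) ^ 2 := by
    have hv : ∀ v : Vx p, (uI E v * uI E v) ^ 2 = uI E v := by
      intro v; unfold uI; split <;> norm_num
    rw [Finset.sum_congr rfl fun v _ => hv v]
    exact sum_uI E
  rw [h2]
  have hcard : ((Fintype.card (Pt p) : ℝ)) = (p : ℝ) ^ 2 := by
    rw [show Fintype.card (Pt p) = Fintype.card (ZMod p) ^ Fintype.card (Fin 2) from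
      Fintype.card_fun]
    simp [ZMod.card]
  have hfiber : ∀ γ : ZMod p × ZMod p,
      (∑ w : Pt p, ∑ v : Vx p, if v.2 - cmul γ v.1 = w then uI E v * uI E v else 0)
        = (E.card : ℝ) ^ 2 := by
    intro γ
    rw [Finset.sum_comm]
    have hrow : ∀ v : Vx p,
        (∑ w : Pt p, if v.2 - cmul γ v.1 = w then uI E v * uI E v else 0) = uI E v := by
      intro v
      rw [Finset.sum_ite_eq, if_pos (Finset.mem_univ _), huu v]
    rw [Finset.sum_congr rfl fun v _ => hrow v]
    exact sum_uI E
  have hCS : ∀ γ ∈ Circ p r, ((E.card : ℝ) ^ 2) ^ 2 / (p : ℝ) ^ 2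
      ≤ ∑ w : Pt p, (∑ v : Vx p, if v.2 - cmul γ v.1 = w then uI E v * uI E v else 0) ^ 2 := by
    intro γ _
    have hCSraw := sq_sum_le_card_mul_sum_sq (s := (Finset.univ : Finset (Pt p)))
      (f := fun w => ∑ v : Vx p, if v.2 - cmul γ v.1 = w then uI E v * uI E v else 0)
    have hc2 : (0:ℝ) < (p : ℝ) ^ 2 := by positivity
    rw [div_le_iff₀ hc2]
    calc ((E.card : ℝ) ^ 2) ^ 2
        = (∑ w : Pt p, ∑ v : Vx p, if v.2 - cmul γ v.1 = w then uI E v * uI E v else 0) ^ 2 := by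
          rw [hfiber γ]
      _ ≤ (Finset.univ.card : ℝ) * ∑ w : Pt p,
            (∑ v : Vx p, if v.2 - cmul γ v.1 = w then uI E v * uI E v else 0) ^ 2 := by
          exact_mod_cast hCSraw
      _ = _ := by rw [Finset.card_univ, hcard]; ring
  have hsum : ((p : ℝ) + 1) * (((E.card : ℝ) ^ 2) ^ 2 / (p : ℝ) ^ 2)
      ≤ ∑ γ ∈ Circ p r, ∑ w : Pt p,
        (∑ v : Vx p, if v.2 - cmul γ v.1 = w then uI E v * uI E v else 0) ^ 2 := by
    calc ((p : ℝ) + 1) * (((E.card : ℝ) ^ 2) ^ 2 / (p : ℝ) ^ 2)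
        = ∑ _γ ∈ Circ p r, ((E.card : ℝ) ^ 2) ^ 2 / (p : ℝ) ^ 2 := by
          rw [Finset.sum_const, card_Circ hp4 hr]
          push_cast
          ring
      _ ≤ _ := Finset.sum_le_sum hCS
  nlinarith [hsum]

end Bounds

section Walk
variable [Fact p.Prime]

lemma TM_isHermitian (E : Finset (Pt p)) (r : ZMod p) : (TM E r).IsHermitian := by
  unfold Matrix.IsHermitian
  ext v v'
  show star (TM E r v' v) = TM E r v v'
  rw [star_trivial]
  have hiff : ((v'.1 ∈ E ∧ v'.2 ∈ E) ∧ (v.1 ∈ E ∧ v.2 ∈ E) ∧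
        (sqnorm (v'.2 - v.2) = r * sqnorm (v'.1 - v.1) ∧ v'.1 ≠ v.1))
      ↔ ((v.1 ∈ E ∧ v.2 ∈ E) ∧ (v'.1 ∈ E ∧ v'.2 ∈ E) ∧
        (sqnorm (v.2 - v'.2) = r * sqnorm (v.1 - v'.1) ∧ v.1 ≠ v'.1)) := by
    rw [sqnorm_sub_comm v'.2 v.2, sqnorm_sub_comm v'.1 v.1]
    constructor
    · rintro ⟨h1, h2, h3, h4⟩
      exact ⟨h2, h1, h3, h4.symm⟩
    · rintro ⟨h1, h2, h3, h4⟩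
      exact ⟨h2, h1, h3, h4.symm⟩
  show (if _ then (1:ℝ) else 0) = (if _ then (1:ℝ) else 0)
  exact if_congr hiff rfl rfl

lemma walk_eq (E : Finset (Pt p)) (r : ZMod p) (m : ℕ) (g f : Vx p → ℝ) :
    (∑ h : Fin (m + 1) → Vx p,
      g (h 0) * (∏ i : Fin m, TM E r (h i.castSucc) (h i.succ)) * f (h (Fin.last m)))
      = g ⬝ᵥ ((TM E r ^ m) *ᵥ f) := by
  induction m generalizing g with
  | zero =>
      rw [(Fintype.sum_equiv (Equiv.funUnique (Fin 1) (Vx p)).symm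
        (fun v : Vx p => g v * 1 * f v) _ (fun v => rfl)).symm]
      rw [pow_zero, Matrix.one_mulVec, dot_eq]
      exact Finset.sum_congr rfl fun v _ => by ring
  | succ m ih =>
      have hpoint : ∀ (v : Vx p) (t : Fin (m + 1) → Vx p),
          (g ((Fin.cons v t : Fin (m + 2) → Vx p) 0) *
            (∏ i : Fin (m + 1), TM E r ((Fin.cons v t : Fin (m + 2) → Vx p) i.castSucc)
              ((Fin.cons v t : Fin (m + 2) → Vx p) i.succ)) *
            f ((Fin.cons v t : Fin (m + 2) → Vx p) (Fin.last (m + 1))))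
          = g v * (TM E r v (t 0) * ∏ i : Fin m, TM E r (t i.castSucc) (t i.succ))
              * f (t (Fin.last m)) := by
        intro v t
        rw [Fin.prod_univ_succ]
        have h1 : ∀ i : Fin m,
            TM E r ((Fin.cons v t : Fin (m + 2) → Vx p) (Fin.succ i).castSucc)
              ((Fin.cons v t : Fin (m + 2) → Vx p) (Fin.succ i).succ)
            = TM E r (t i.castSucc) (t i.succ) := by
          intro i
          rw [← Fin.succ_castSucc, Fin.cons_succ, Fin.cons_succ]
        rw [Finset.prod_congr rfl fun i _ => h1 i]
        rw [← Fin.succ_last, Fin.cons_succ, Fin.cons_zero, Fin.castSucc_zero,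
          Fin.cons_zero, Fin.cons_succ]
      rw [(Fintype.sum_equiv (Fin.consEquiv (fun _ : Fin (m + 2) => Vx p))
        (fun q : Vx p × (Fin (m + 1) → Vx p) =>
          g q.1 * (TM E r q.1 (q.2 0) * ∏ i : Fin m, TM E r (q.2 i.castSucc) (q.2 i.succ))
            * f (q.2 (Fin.last m))) _
        (fun q => (hpoint q.1 q.2).symm)).symm]
      rw [Fintype.sum_prod_type]
      have hrow : ∀ v : Vx p,
          (∑ t : Fin (m + 1) → Vx p,
            g v * (TM E r v (t 0) * ∏ i : Fin m, TM E r (t i.castSucc) (t i.succ))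
              * f (t (Fin.last m)))
          = ∑ t : Fin (m + 1) → Vx p,
              (g v * TM E r v (t 0)) * (∏ i : Fin m, TM E r (t i.castSucc) (t i.succ))
                * f (t (Fin.last m)) :=
        fun v => Finset.sum_congr rfl fun t _ => by ring
      rw [Finset.sum_congr rfl fun v _ => hrow v, Finset.sum_comm]
      have hcol : ∀ t : Fin (m + 1) → Vx p,
          (∑ v : Vx p, (g v * TM E r v (t 0)) *
            (∏ i : Fin m, TM E r (t i.castSucc) (t i.succ)) * f (t (Fin.last m)))
          = (g ᵥ* TM E r) (t 0) * (∏ i : Fin m, TM E r (t i.castSucc) (t i.succ))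
              * f (t (Fin.last m)) := by
        intro t
        rw [show (g ᵥ* TM E r) (t 0) = ∑ v : Vx p, g v * TM E r v (t 0) from rfl,
          Finset.sum_mul, Finset.sum_mul]
      rw [Finset.sum_congr rfl fun t _ => hcol t, ih (g ᵥ* TM E r)]
      rw [pow_succ', ← Matrix.mulVec_mulVec, Matrix.dotProduct_mulVec,
        Matrix.dotProduct_mulVec, Matrix.dotProduct_mulVec]

end Walk

section Count
variable [Fact p.Prime]

lemma count_eq (E : Finset (Pt p)) (r : ZMod p) (k : ℕ) :
    ((Nat.card {xy : (Fin (k + 1) → Pt p) × (Fin (k + 1) → Pt p) |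
        (∀ i, xy.1 i ∈ E) ∧ (∀ i, xy.2 i ∈ E) ∧
        (∀ i : Fin k, sqnorm (xy.2 i.castSucc - xy.2 i.succ)
            = r * sqnorm (xy.1 i.castSucc - xy.1 i.succ) ∧
          xy.1 i.castSucc ≠ xy.1 i.succ)}) : ℝ)
      = uI E ⬝ᵥ ((TM E r ^ k) *ᵥ uI E) := by
  classical
  rw [← walk_eq E r k (uI E) (uI E)]
  set P : ((Fin (k + 1) → Pt p) × (Fin (k + 1) → Pt p)) → Prop := fun xy =>
    (∀ i, xy.1 i ∈ E) ∧ (∀ i, xy.2 i ∈ E) ∧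
      (∀ i : Fin k, sqnorm (xy.2 i.castSucc - xy.2 i.succ)
          = r * sqnorm (xy.1 i.castSucc - xy.1 i.succ) ∧
        xy.1 i.castSucc ≠ xy.1 i.succ) with hP
  have hc : Nat.card {xy : (Fin (k + 1) → Pt p) × (Fin (k + 1) → Pt p) | P xy}
      = (Finset.univ.filter P).card := by
    rw [Nat.card_eq_fintype_card]
    exact Fintype.card_subtype _
  rw [hc, show ((Finset.univ.filter P).card : ℝ) = ∑ xy, if P xy then (1:ℝ) else 0 from
    (Finset.sum_boole P Finset.univ).symm]
  set e := Equiv.arrowProdEquivProdArrow (Fin (k + 1)) (fun _ => Pt p) (fun _ => Pt p) with he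
  rw [← Fintype.sum_equiv e (fun h => if P (e h) then (1:ℝ) else 0)
    (fun xy => if P xy then (1:ℝ) else 0) (fun h => rfl)]
  refine Finset.sum_congr rfl fun h _ => ?_
  have hPiff : P (e h) ↔
      (((h 0).1 ∈ E ∧ (h 0).2 ∈ E)
        ∧ (∀ i : Fin k, ((h i.castSucc).1 ∈ E ∧ (h i.castSucc).2 ∈ E)
            ∧ ((h i.succ).1 ∈ E ∧ (h i.succ).2 ∈ E)
            ∧ (sqnorm ((h i.castSucc).2 - (h i.succ).2)
                = r * sqnorm ((h i.castSucc).1 - (h i.succ).1)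
              ∧ (h i.castSucc).1 ≠ (h i.succ).1))
        ∧ ((h (Fin.last k)).1 ∈ E ∧ (h (Fin.last k)).2 ∈ E)) := by
    rw [hP]
    show ((∀ i, (h i).1 ∈ E) ∧ (∀ i, (h i).2 ∈ E) ∧ _) ↔ _
    constructor
    · rintro ⟨hx, hy, hcond⟩
      exact ⟨⟨hx 0, hy 0⟩,
        fun i => ⟨⟨hx _, hy _⟩, ⟨hx _, hy _⟩, hcond i⟩,
        ⟨hx _, hy _⟩⟩
    · rintro ⟨h0, hstep, hl⟩
      refine ⟨?_, ?_, fun i => (hstep i).2.2⟩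
      · intro j
        rcases Fin.eq_castSucc_or_eq_last j with ⟨i, rfl⟩ | rfl
        · exact (hstep i).1.1
        · exact hl.1
      · intro j
        rcases Fin.eq_castSucc_or_eq_last j with ⟨i, rfl⟩ | rfl
        · exact (hstep i).1.2
        · exact hl.2
  rw [if_congr hPiff rfl rfl]
  have hprod : (∏ i : Fin k, TM E r (h i.castSucc) (h i.succ))
      = if (∀ i : Fin k, ((h i.castSucc).1 ∈ E ∧ (h i.castSucc).2 ∈ E)
            ∧ ((h i.succ).1 ∈ E ∧ (h i.succ).2 ∈ E)
            ∧ (sqnorm ((h i.castSucc).2 - (h i.succ).2)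
                = r * sqnorm ((h i.castSucc).1 - (h i.succ).1)
              ∧ (h i.castSucc).1 ≠ (h i.succ).1)) then (1:ℝ) else 0 := by
    have hTMa : ∀ i : Fin k, TM E r (h i.castSucc) (h i.succ)
        = if (((h i.castSucc).1 ∈ E ∧ (h i.castSucc).2 ∈ E)
            ∧ ((h i.succ).1 ∈ E ∧ (h i.succ).2 ∈ E)
            ∧ (sqnorm ((h i.castSucc).2 - (h i.succ).2)
                = r * sqnorm ((h i.castSucc).1 - (h i.succ).1)
              ∧ (h i.castSucc).1 ≠ (h i.succ).1)) then (1:ℝ) else 0 := fun i => rfl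
    rw [Finset.prod_congr rfl fun i _ => hTMa i, Fintype.prod_boole]
    convert rfl
  rw [hprod]
  show _ = uI E (h 0) * _ * uI E (h (Fin.last k))
  unfold uI
  by_cases h1 : (h 0).1 ∈ E ∧ (h 0).2 ∈ E <;>
    by_cases h2 : (∀ i : Fin k, ((h i.castSucc).1 ∈ E ∧ (h i.castSucc).2 ∈ E)
            ∧ ((h i.succ).1 ∈ E ∧ (h i.succ).2 ∈ E)
            ∧ (sqnorm ((h i.castSucc).2 - (h i.succ).2)
                = r * sqnorm ((h i.castSucc).1 - (h i.succ).1)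
              ∧ (h i.castSucc).1 ≠ (h i.succ).1)) <;>
    by_cases h3 : (h (Fin.last k)).1 ∈ E ∧ (h (Fin.last k)).2 ∈ E <;>
    simp [h1, h2, h3]

end Count

section Spec

lemma dot_eq' {N : Type*} [Fintype N] (g h : N → ℝ) : g ⬝ᵥ h = ∑ v, g v * h v := rfl

lemma scalar_ineq {m w : ℝ} (hw : 0 ≤ w) (hm : -w ≤ m) (k : ℕ) :
    w ^ k * m ≤ m ^ (k + 1) + w ^ (k + 1) := by
  rcases le_total m 0 with h | h
  · have h1 : |m| ≤ w := abs_le.2 ⟨hm, le_trans h hw⟩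
    have h2 : |m| ^ (k + 1) ≤ w ^ (k + 1) := pow_le_pow_left₀ (abs_nonneg m) h1 (k + 1)
    have h3 : -(w ^ (k + 1)) ≤ m ^ (k + 1) := by
      calc -(w ^ (k + 1)) ≤ -(|m| ^ (k + 1)) := by linarith
        _ = -(|m ^ (k + 1)|) := by rw [abs_pow]
        _ ≤ m ^ (k + 1) := neg_abs_le _
    have h4 : w ^ k * m ≤ 0 := mul_nonpos_of_nonneg_of_nonpos (pow_nonneg hw k) h
    linarith
  · rcases le_total m w with h2 | h2
    · have h5 : w ^ k * m ≤ w ^ k * w := mul_le_mul_of_nonneg_left h2 (pow_nonneg hw k)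
      have hp : (0:ℝ) ≤ m ^ (k + 1) := pow_nonneg h (k + 1)
      calc w ^ k * m ≤ w ^ (k + 1) := by rw [pow_succ]; exact h5
        _ ≤ m ^ (k + 1) + w ^ (k + 1) := by linarith
    · have h3 : w ^ k ≤ m ^ k := pow_le_pow_left₀ hw h2 k
      have h5 : w ^ k * m ≤ m ^ k * m := mul_le_mul_of_nonneg_right h3 h
      have hp : (0:ℝ) ≤ w ^ (k + 1) := pow_nonneg hw (k + 1)
      calc w ^ k * m ≤ m ^ (k + 1) := by rw [pow_succ]; exact h5
        _ ≤ m ^ (k + 1) + w ^ (k + 1) := by linarith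

lemma spec_ineq {N : Type*} [Fintype N] [DecidableEq N] (T : Matrix N N ℝ)
    (hT : T.IsHermitian) (u : N → ℝ) (c w : ℝ) (hc : 0 ≤ c) (hcw : c ≤ w)
    (hquad : ∀ g : N → ℝ, -(c * (g ⬝ᵥ g)) ≤ g ⬝ᵥ (T *ᵥ g)) (k : ℕ) :
    w ^ k * (u ⬝ᵥ (T *ᵥ u)) - w ^ (k + 1) * (u ⬝ᵥ u) ≤ u ⬝ᵥ ((T ^ (k + 1)) *ᵥ u) := by
  have hw : (0:ℝ) ≤ w := le_trans hc hcw
  set U : Matrix N N ℝ := (hT.eigenvectorUnitary : Matrix N N ℝ) with hU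
  set lam := hT.eigenvalues with hlamdef
  have hU1 : U * star U = 1 := (Matrix.mem_unitaryGroup_iff).mp hT.eigenvectorUnitary.2
  have hU2 : star U * U = 1 := mul_eq_one_comm.mp hU1
  have hD : Matrix.diagonal (RCLike.ofReal ∘ lam) = Matrix.diagonal lam := by
    congr 1
  have hTm : ∀ m : ℕ, T ^ m = U * (Matrix.diagonal lam) ^ m * star U := by
    intro m
    induction m with
    | zero => rw [pow_zero, pow_zero, mul_one, hU1]
    | succ m ih =>
        rw [pow_succ, ih, pow_succ]
        calc U * Matrix.diagonal lam ^ m * star U * T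
            = U * Matrix.diagonal lam ^ m * star U *
              (U * Matrix.diagonal lam * star U) := by
              rw [← hD]; nth_rewrite 1 [hT.spectral_theorem]; rw [Unitary.conjStarAlgAut_apply]
          _ = U * (Matrix.diagonal lam ^ m * Matrix.diagonal lam) * star U := by
              rw [show U * Matrix.diagonal lam ^ m * star U * (U * Matrix.diagonal lam * star U)
                  = U * Matrix.diagonal lam ^ m * (star U * U) * (Matrix.diagonal lam * star U) by
                    noncomm_ring, hU2]
              noncomm_ring
  have hcv : ∀ m : ℕ, u ⬝ᵥ ((T ^ m) *ᵥ u)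
      = ∑ j, lam j ^ m * ((u ᵥ* U) j) ^ 2 := by
    intro m
    rw [hTm m, ← Matrix.mulVec_mulVec, ← Matrix.mulVec_mulVec, Matrix.dotProduct_mulVec]
    have hstar : (star U) *ᵥ u = u ᵥ* U := by
      rw [show star U = Uᵀ by
        rw [Matrix.star_eq_conjTranspose, Matrix.conjTranspose_eq_transpose_of_trivial]]
      exact Matrix.mulVec_transpose U u
    rw [hstar, Matrix.diagonal_pow, dot_eq']
    refine Finset.sum_congr rfl fun j _ => ?_
    rw [Matrix.mulVec_diagonal]
    have : (lam ^ m) j = lam j ^ m := rfl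
    rw [this]
    ring
  have hvj1 : ∀ j, ⇑(hT.eigenvectorBasis j) ⬝ᵥ ⇑(hT.eigenvectorBasis j) = 1 := by
    intro j
    have h1 : (star U * U) j j = 1 := by rw [hU2, Matrix.one_apply_eq]
    rw [Matrix.mul_apply] at h1
    rw [dot_eq']
    rw [← h1]
    refine Finset.sum_congr rfl fun i _ => ?_
    rw [Matrix.star_apply, star_trivial]
    have he : U i j = ⇑(hT.eigenvectorBasis j) i := rfl
    rw [he]
  have hlam : ∀ j, -w ≤ lam j := by
    intro j
    have h1 := hquad ⇑(hT.eigenvectorBasis j)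
    have hTb : ⇑(hT.eigenvectorBasis j) ⬝ᵥ (T *ᵥ ⇑(hT.eigenvectorBasis j)) = lam j := by
      rw [hT.mulVec_eigenvectorBasis, dotProduct_smul, hvj1 j]
      simp [hlamdef]
    rw [hTb, hvj1 j] at h1
    rw [mul_one] at h1
    linarith
  have h0 : u ⬝ᵥ u = ∑ j, ((u ᵥ* U) j) ^ 2 := by
    have := hcv 0
    rw [pow_zero, Matrix.one_mulVec] at this
    rw [this]
    exact Finset.sum_congr rfl fun j _ => by rw [pow_zero, one_mul]
  have h1 : u ⬝ᵥ (T *ᵥ u) = ∑ j, lam j * ((u ᵥ* U) j) ^ 2 := by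
    have := hcv 1
    rw [pow_one] at this
    rw [this]
    exact Finset.sum_congr rfl fun j _ => by rw [pow_one]
  rw [hcv (k + 1), h0, h1, Finset.mul_sum, Finset.mul_sum, ← Finset.sum_sub_distrib]
  refine Finset.sum_le_sum fun j _ => ?_
  have hsc := scalar_ineq hw (hlam j) k
  nlinarith [sq_nonneg ((u ᵥ* U) j), mul_le_mul_of_nonneg_right hsc
    (sq_nonneg ((u ᵥ* U) j))]

end Spec

end Stmt10

open Matrix in
theorem stmt10 (p : ℕ) [Fact p.Prime] (hp4 : p % 4 = 3)
    (r : ZMod p) (hr : r ≠ 0) (k : ℕ) (hk : 1 ≤ k)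
    (E : Finset (Fin 2 → ZMod p)) (hE : 2 * p < E.card) :
    ((E.card : ℝ)) ^ (2 * k + 2) / (3 * (p : ℝ)) ^ k
      < (Nat.card {xy : (Fin (k + 1) → (Fin 2 → ZMod p)) × (Fin (k + 1) → (Fin 2 → ZMod p)) |
          (∀ i, xy.1 i ∈ E) ∧ (∀ i, xy.2 i ∈ E) ∧
          (∀ i : Fin k, sqnorm (xy.2 i.castSucc - xy.2 i.succ) = r * sqnorm (xy.1 i.castSucc - xy.1 i.succ) ∧
            xy.1 i.castSucc ≠ xy.1 i.succ)} : ℝ) := by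
  classical
  obtain ⟨k', rfl⟩ : ∃ k', k = k' + 1 := ⟨k - 1, by omega⟩
  rw [Stmt10.count_eq E r (k' + 1)]
  have hp3 : (3:ℕ) ≤ p := by omega
  have hP3 : (3:ℝ) ≤ (p:ℝ) := by exact_mod_cast hp3
  have hP0 : (0:ℝ) < (p:ℝ) := by linarith
  set n : ℝ := (E.card : ℝ) with hn
  have hnn : 2 * (p:ℝ) + 1 ≤ n := by
    have h1 : 2 * p + 1 ≤ E.card := by omega
    rw [hn]
    exact_mod_cast h1
  have hn0 : (0:ℝ) < n := by linarith
  have hnsq : (2 * (p:ℝ) + 1) ^ 2 ≤ n ^ 2 := by nlinarith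
  set w : ℝ := n ^ 2 / (3 * (p:ℝ)) with hw
  have hw0 : (0:ℝ) < w := by rw [hw]; positivity
  have hcw : (p:ℝ) + 1 ≤ w := by
    rw [hw, le_div_iff₀ (by positivity)]
    nlinarith
  have hquad := Stmt10.quad_ge hp4 hr E
  have hs1 := Stmt10.s1_ge hp4 hr E
  have hspec := Stmt10.spec_ineq (Stmt10.TM E r) (Stmt10.TM_isHermitian E r) (Stmt10.uI E)
    ((p:ℝ) + 1) w (by positivity) hcw hquad k'
  have huu : Stmt10.uI E ⬝ᵥ Stmt10.uI E = n ^ 2 := by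
    rw [Stmt10.dot_eq, Finset.sum_congr rfl fun v _ => Stmt10.uI_mul_self E v]
    exact Stmt10.sum_uI E
  rw [huu] at hspec
  have hkey : 2 * w * n ^ 2 < Stmt10.uI E ⬝ᵥ (Stmt10.TM E r *ᵥ Stmt10.uI E) := by
    have h2 : 2 * w * n ^ 2 < ((p:ℝ) + 1) * ((n ^ 2) ^ 2 / (p:ℝ) ^ 2 - n ^ 2) := by
      have e1 : 2 * w * n ^ 2 = (2 * (n ^ 2) ^ 2) / (3 * (p:ℝ)) := by
        rw [hw]; ring
      have e2 : ((p:ℝ) + 1) * ((n ^ 2) ^ 2 / (p:ℝ) ^ 2 - n ^ 2)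
          = (((p:ℝ) + 1) * ((n ^ 2) ^ 2 - (p:ℝ) ^ 2 * n ^ 2)) / (p:ℝ) ^ 2 := by
        have hp2 : ((p:ℝ)) ^ 2 ≠ 0 := by positivity
        field_simp
      rw [e1, e2, div_lt_div_iff₀ (by positivity) (by positivity)]
      have hn4 : (2 * (p:ℝ) + 1) ^ 2 * n ^ 2 ≤ (n ^ 2) ^ 2 := by nlinarith
      nlinarith [mul_pos hP0 (mul_pos hn0 hn0), sq_nonneg n, mul_pos hP0 hP0,
        mul_le_mul_of_nonneg_left hnsq (le_of_lt hP0),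
        mul_le_mul_of_nonneg_left hn4 (le_of_lt hP0),
        mul_le_mul_of_nonneg_left hn4 (mul_nonneg (le_of_lt hP0) (le_of_lt hP0))]
    linarith
  have hfin : n ^ (2 * (k' + 1) + 2) / (3 * (p:ℝ)) ^ (k' + 1) = w ^ (k' + 1) * n ^ 2 := by
    rw [hw, div_pow, ← pow_mul]
    rw [div_mul_eq_mul_div, div_eq_div_iff (by positivity) (by positivity)]
    ring
  rw [hfin]
  have hwk : (0:ℝ) < w ^ k' := by positivity
  calc w ^ (k' + 1) * n ^ 2
      < w ^ k' * (Stmt10.uI E ⬝ᵥ (Stmt10.TM E r *ᵥ Stmt10.uI E)) - w ^ (k' + 1) * n ^ 2 := by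
        have hh := mul_lt_mul_of_pos_left hkey hwk
        have hps : w ^ (k' + 1) = w ^ k' * w := pow_succ w k'
        nlinarith
    _ ≤ _ := hspec
end

section
/- Let p be an odd prime, r a nonzero quadratic residue in 𝔽_p with square root √r, θ ∈ O_d(𝔽_p), and E ⊆ 𝔽_p^d. With λ_{r,θ}(z) = |{(u,v) ∈ E² : u − √r θ v = z}|, for any fixed k < l in [d+1] we have |{(u₁,…,u_{d+1},v₁,…,v_{d+1}) ∈ E^{2d+2} : uᵢ − uⱼ = √r θ(vᵢ − vⱼ) for all 1 ≤ i < j ≤ d+1, and v_k = v_l}| = ∑_{z ∈ 𝔽_p^d} λ_{r,θ}(z)^d. -/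
open Matrix

private lemma sigma_fun_ext {α β : Type*} {d : ℕ} {F : α → Set β} {z z' : α} (hz : z' = z)
    (g' : Fin d → F z') (g : Fin d → F z) (h : ∀ i, ((g' i : β)) = g i) :
    (⟨z', g'⟩ : (w : α) × (Fin d → F w)) = ⟨z, g⟩ := by
  subst hz
  congr 1
  funext i
  exact Subtype.ext (h i)

theorem stmt13 (p d : ℕ) [Fact p.Prime] (hodd : Odd p)
    (r s : ZMod p) (hr : r ≠ 0) (hs : s ^ 2 = r)
    (θ : Matrix (Fin d) (Fin d) (ZMod p)) (hθ : θᵀ * θ = 1)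
    (E : Finset (Fin d → ZMod p)) (k l : Fin (d + 1)) (hkl : k < l) :
    Nat.card {uv : (Fin (d + 1) → (Fin d → ZMod p)) × (Fin (d + 1) → (Fin d → ZMod p)) |
        (∀ i, uv.1 i ∈ E) ∧ (∀ i, uv.2 i ∈ E) ∧
        (∀ i j : Fin (d + 1), i < j → uv.1 i - uv.1 j = s • θ.mulVec (uv.2 i - uv.2 j)) ∧
        uv.2 k = uv.2 l}
      = ∑ z : Fin d → ZMod p,
          (Nat.card {uv : (Fin d → ZMod p) × (Fin d → ZMod p) |
            uv.1 ∈ E ∧ uv.2 ∈ E ∧ uv.1 - s • θ.mulVec uv.2 = z}) ^ d := by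
  classical
  set F : (Fin d → ZMod p) → Set ((Fin d → ZMod p) × (Fin d → ZMod p)) :=
    fun z => {uv | uv.1 ∈ E ∧ uv.2 ∈ E ∧ uv.1 - s • θ.mulVec uv.2 = z} with hFdef
  -- the index k', with l.succAbove k' = k
  have hkd : (k : ℕ) < d := lt_of_lt_of_le hkl (Nat.lt_succ_iff.mp l.isLt)
  set k' : Fin d := ⟨(k : ℕ), hkd⟩ with hk'def
  have hck : Fin.castSucc k' = k := Fin.ext rfl
  have hsk : l.succAbove k' = k := by
    rw [Fin.succAbove_of_castSucc_lt _ _ (by rwa [hck]), hck]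
  have hek : finSuccEquiv' l k = some k' := by
    rw [← hsk, finSuccEquiv'_succAbove]
  -- the equivalence
  have key : Nat.card {uv : (Fin (d + 1) → (Fin d → ZMod p)) × (Fin (d + 1) → (Fin d → ZMod p)) |
        (∀ i, uv.1 i ∈ E) ∧ (∀ i, uv.2 i ∈ E) ∧
        (∀ i j : Fin (d + 1), i < j → uv.1 i - uv.1 j = s • θ.mulVec (uv.2 i - uv.2 j)) ∧
        uv.2 k = uv.2 l}
      = Nat.card ((z : Fin d → ZMod p) × (Fin d → F z)) := by
    apply Nat.card_congr
    refine
      { toFun := fun x =>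
          ⟨x.1.1 k - s • θ.mulVec (x.1.2 k), fun i =>
            ⟨(x.1.1 (l.succAbove i), x.1.2 (l.succAbove i)), ?_⟩⟩
        invFun := fun x =>
          ⟨(fun j => (x.2 ((finSuccEquiv' l j).getD k')).1.1,
            fun j => (x.2 ((finSuccEquiv' l j).getD k')).1.2), ?_⟩
        left_inv := ?_
        right_inv := ?_ }
    · obtain ⟨⟨u, v⟩, h1, h2, h3, h4⟩ := x
      have hconst : ∀ a b : Fin (d + 1),
          u a - s • θ.mulVec (v a) = u b - s • θ.mulVec (v b) := by
        intro a b
        rcases lt_trichotomy a b with hab | hab | hab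
        · have := h3 a b hab
          rw [mulVec_sub, smul_sub] at this
          rwa [sub_eq_sub_iff_sub_eq_sub]
        · rw [hab]
        · have := h3 b a hab
          rw [mulVec_sub, smul_sub] at this
          rw [sub_eq_sub_iff_sub_eq_sub]
          exact (neg_inj.mp (by rw [neg_sub, neg_sub, this]))
      exact ⟨h1 _, h2 _, hconst _ k⟩
    · obtain ⟨z, g⟩ := x
      refine ⟨fun j => (g _).2.1, fun j => (g _).2.2.1, ?_, ?_⟩
      · intro a b _
        have ha := (g ((finSuccEquiv' l a).getD k')).2.2.2
        have hb := (g ((finSuccEquiv' l b).getD k')).2.2.2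
        rw [mulVec_sub, smul_sub, ← sub_eq_sub_iff_sub_eq_sub]
        exact ha.trans hb.symm
      · simp only [hek, finSuccEquiv'_at, Option.getD_some, Option.getD_none]
    · rintro ⟨⟨u, v⟩, h1, h2, h3, h4⟩
      have hukl : u k = u l := by
        have := h3 k l hkl
        rw [h4, sub_self, mulVec_zero, smul_zero] at this
        exact sub_eq_zero.mp this
      apply Subtype.ext
      dsimp only
      have hgood : ∀ j : Fin (d + 1),
          u (l.succAbove ((finSuccEquiv' l j).getD k')) = u j ∧
          v (l.succAbove ((finSuccEquiv' l j).getD k')) = v j := by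
        intro j
        by_cases hj : j = l
        · subst hj
          rw [finSuccEquiv'_at]
          simp only [Option.getD_none, hsk]
          exact ⟨hukl, h4⟩
        · have hne : finSuccEquiv' l j ≠ none := by
            intro hn
            exact hj ((finSuccEquiv' l).injective (hn.trans (finSuccEquiv'_at l).symm))
          obtain ⟨j', hj'⟩ := Option.ne_none_iff_exists'.mp hne
          have hsj : l.succAbove j' = j := by
            have h5 := congrArg (finSuccEquiv' l).symm hj'
            rw [Equiv.symm_apply_apply, finSuccEquiv'_symm_some] at h5
            exact h5.symm
          rw [hj', Option.getD_some, hsj]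
          exact ⟨rfl, rfl⟩
      exact Prod.ext (funext fun j => (hgood j).1) (funext fun j => (hgood j).2)
    · rintro ⟨z, g⟩
      have hz : (g ((finSuccEquiv' l k).getD k')).1.1
          - s • θ.mulVec ((g ((finSuccEquiv' l k).getD k')).1.2) = z :=
        (g _).2.2.2
      refine sigma_fun_ext hz _ _ fun i => ?_
      simp only [finSuccEquiv'_succAbove, Option.getD_some]
  rw [key]
  letI i1 : ∀ z, Fintype (F z) := fun z => Fintype.ofFinite _
  letI i2 : ∀ z, Fintype (Fin d → F z) := fun z => Pi.instFintype
  letI i3 : Fintype ((z : Fin d → ZMod p) × (Fin d → F z)) := Sigma.instFintype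
  rw [Nat.card_eq_fintype_card (α := (z : Fin d → ZMod p) × (Fin d → F z))]
  rw [Fintype.card_sigma]
  refine Finset.sum_congr rfl fun z _ => ?_
  rw [← Nat.card_eq_fintype_card, Nat.card_fun,
    Nat.card_eq_fintype_card (α := Fin d), Fintype.card_fin]
end

section
/- Let p ≡ 3 (mod 4) be a prime, r ∈ 𝔽_p*, and E ⊆ 𝔽_p² with |E| > 2p. Define S₁(r) = {(x₁,x₂,y₁,y₂) ∈ E⁴ : ‖y₁−y₂‖ = r‖x₁−x₂‖, x₁ ≠ x₂}. Then |S₁(r)| > |E|⁴ / (3p). -/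
open Finset Complex

namespace IKP18

variable {p : ℕ} [hp : Fact p.Prime]

noncomputable def ee (p : ℕ) [NeZero p] : AddChar (ZMod p) ℂ := ZMod.stdAddChar

lemma ee_prim (p : ℕ) [NeZero p] : (ee p).IsPrimitive := ZMod.isPrimitive_stdAddChar p

lemma orth (b : ZMod p) : ∑ s : ZMod p, ee p (s * b) = if b = 0 then (p : ℂ) else 0 := by
  have := AddChar.sum_mulShift b (ee_prim p)
  rw [ZMod.card] at this
  rw [this]
  split <;> simp

lemma ee_neg (x : ZMod p) : ee p (-x) = (starRingEnd ℂ) (ee p x) := by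
  have h : (0:ℕ) < ringChar (ZMod p) := by
    rw [ZMod.ringChar_zmod_n]; exact hp.out.pos
  rw [AddChar.starComp_apply h, AddChar.inv_apply]

end IKP18

namespace IKP18

variable {p : ℕ} [hp : Fact p.Prime]

lemma two_ne (hp2 : p ≠ 2) : (2 : ZMod p) ≠ 0 := by
  intro h
  rw [show (2 : ZMod p) = ((2:ℕ) : ZMod p) by norm_cast, ZMod.natCast_eq_zero_iff] at h
  exact hp2 ((Nat.prime_dvd_prime_iff_eq hp.out Nat.prime_two).mp h)

lemma four_ne (hp2 : p ≠ 2) : (4 : ZMod p) ≠ 0 := by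
  have h := two_ne (p := p) hp2
  intro h4
  apply h
  have : (4 : ZMod p) = 2 * 2 := by norm_num
  rw [this] at h4
  rcases mul_eq_zero.mp h4 with h' | h' <;> exact h'

lemma Gsq (hp4 : p % 4 = 3) {c : ZMod p} (hc : c ≠ 0) :
    (∑ u : ZMod p, ee p (c * u ^ 2)) ^ 2 = -(p : ℂ) := by
  classical
  have hp2 : p ≠ 2 := by omega
  have hch2 : ringChar (ZMod p) ≠ 2 := by rw [ZMod.ringChar_zmod_n]; exact hp2
  set χ : MulChar (ZMod p) ℂ := (quadraticChar (ZMod p)).ringHomComp (Int.castRingHom ℂ) with hχ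
  have hχ₁ : χ ≠ 1 :=
    (MulChar.ringHomComp_ne_one_iff (RingHom.injective_int _)).mpr (quadraticChar_ne_one hch2)
  have hχ₂ : χ.IsQuadratic := (quadraticChar_isQuadratic (ZMod p)).comp _
  have hfib : ∑ u : ZMod p, ee p (c * u ^ 2)
      = ∑ t : ZMod p, ((Finset.univ.filter (fun u : ZMod p => u ^ 2 = t)).card : ℂ) * ee p (c * t) := by
    rw [← Finset.sum_fiberwise_of_maps_to (fun u _ => Finset.mem_univ (u ^ 2))
        (fun u => ee p (c * u ^ 2))]
    refine Finset.sum_congr rfl fun t _ => ?_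
    rw [Finset.sum_congr rfl (fun u hu => ?_), Finset.sum_const, nsmul_eq_mul]
    rw [Finset.mem_filter] at hu
    rw [hu.2]
  have hcard : ∀ t : ZMod p,
      ((Finset.univ.filter (fun u : ZMod p => u ^ 2 = t)).card : ℂ) = χ t + 1 := by
    intro t
    have h := quadraticChar_card_sqrts hch2 t
    rw [Set.toFinset_setOf] at h
    have : ((Finset.univ.filter (fun u : ZMod p => u ^ 2 = t)).card : ℤ) = quadraticChar (ZMod p) t + 1 := h
    have := congrArg (Int.cast : ℤ → ℂ) this
    push_cast at this
    rw [this]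
    rfl
  have hzero : ∑ t : ZMod p, ee p (c * t) = 0 := by
    have := orth (p := p) c
    rw [if_neg hc] at this
    rw [← this]
    exact Finset.sum_congr rfl fun t _ => by rw [mul_comm]
  have hgs : ∑ u : ZMod p, ee p (c * u ^ 2) = gaussSum χ (AddChar.mulShift (ee p) c) := by
    rw [hfib]
    rw [show gaussSum χ (AddChar.mulShift (ee p) c) = ∑ t : ZMod p, χ t * ee p (c * t) from rfl]
    have : ∑ t : ZMod p, (χ t + 1) * ee p (c * t)
        = (∑ t : ZMod p, χ t * ee p (c * t)) + ∑ t : ZMod p, ee p (c * t) := by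
      rw [← Finset.sum_add_distrib]
      exact Finset.sum_congr rfl fun t _ => by ring
    rw [Finset.sum_congr rfl fun t _ => by rw [hcard t], this, hzero, add_zero]
  have hcu : χ c ^ 2 = 1 := by
    have := quadraticChar_sq_one hc
    have := congrArg (Int.cast : ℤ → ℂ) (congrArg (· ^ 2) (rfl : quadraticChar (ZMod p) c = quadraticChar (ZMod p) c))
    have h2 : ((quadraticChar (ZMod p) c : ℤ) : ℂ) ^ 2 = 1 := by
      rw [← Int.cast_pow, quadraticChar_sq_one hc]; norm_num
    exact h2
  have hshift := gaussSum_mulShift χ (ee p) (Units.mk0 c hc)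
  have hsq := gaussSum_sq hχ₁ hχ₂ (ee_prim p)
  have hneg1 : χ (-1) = -1 := by
    have h : ¬ IsSquare (-1 : ZMod p) := by
      rw [ZMod.exists_sq_eq_neg_one_iff]
      omega
    have := quadraticChar_neg_one_iff_not_isSquare.mpr h
    show ((quadraticChar (ZMod p) (-1) : ℤ) : ℂ) = -1
    rw [this]; norm_num
  have key : (gaussSum χ (AddChar.mulShift (ee p) c)) ^ 2 = (gaussSum χ (ee p)) ^ 2 := by
    have : (χ c * gaussSum χ (AddChar.mulShift (ee p) c)) ^ 2 = (gaussSum χ (ee p)) ^ 2 := by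
      rw [show ((Units.mk0 c hc : (ZMod p)ˣ) : ZMod p) = c from rfl] at hshift
      rw [hshift]
    rw [mul_pow, hcu, one_mul] at this
    exact this
  rw [hgs, key, hsq, hneg1, ZMod.card]
  ring

end IKP18

namespace IKP18

variable {p : ℕ} [hp : Fact p.Prime]

lemma csq (hp2 : p ≠ 2) {c : ZMod p} (hc : c ≠ 0) (b : ZMod p) :
    ∑ u : ZMod p, ee p (c * u ^ 2 + b * u)
      = ee p (-(b ^ 2) * (4 * c)⁻¹) * ∑ u : ZMod p, ee p (c * u ^ 2) := by
  have h2 : (2 : ZMod p) ≠ 0 := two_ne hp2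
  have h4 : (4 : ZMod p) ≠ 0 := four_ne hp2
  set t : ZMod p := b * (2 * c)⁻¹ with ht
  have step1 : ∑ u : ZMod p, ee p (c * u ^ 2 + b * u)
      = ∑ u : ZMod p, ee p (c * (u - t) ^ 2 + b * (u - t)) := by
    refine (Fintype.sum_equiv (Equiv.subRight t) _ _ fun u => ?_).symm
    simp [Equiv.subRight]
  have harg : ∀ u : ZMod p, c * (u - t) ^ 2 + b * (u - t) = -(b ^ 2) * (4 * c)⁻¹ + c * u ^ 2 := by
    intro u
    rw [ht]
    field_simp
    ring
  rw [step1, Finset.sum_congr rfl fun u _ => by rw [harg u, AddChar.map_add_eq_mul], ← Finset.mul_sum]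

lemma normzero (hp4 : p % 4 = 3) (d : Fin 2 → ZMod p) : sqnorm d = 0 ↔ d = 0 := by
  constructor
  · intro h
    rw [sqnorm, Fin.sum_univ_two] at h
    have hd1 : d 1 = 0 := by
      by_contra h1
      have hsq : IsSquare (-1 : ZMod p) := by
        refine ⟨d 0 * (d 1)⁻¹, ?_⟩
        have : d 0 ^ 2 = -(d 1 ^ 2) := by linear_combination h
        field_simp
        linear_combination -this
      rw [ZMod.exists_sq_eq_neg_one_iff] at hsq
      omega
    have hd0 : d 0 = 0 := by
      rw [hd1] at h
      have : d 0 ^ 2 = 0 := by linear_combination h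
      exact pow_eq_zero_iff (n := 2) (by norm_num) |>.mp this
    funext i
    fin_cases i <;> simp [hd0, hd1]
  · intro h
    rw [h, sqnorm]
    simp

end IKP18

namespace IKP18

variable {p : ℕ} [hp : Fact p.Prime]

noncomputable def A (E : Finset (Fin 2 → ZMod p)) (x : Fin 2 → ZMod p) : ℂ :=
  if x ∈ E then 1 else 0

def dp (ξ y : Fin 2 → ZMod p) : ZMod p := ξ 0 * y 0 + ξ 1 * y 1

noncomputable def Fh (E : Finset (Fin 2 → ZMod p)) (ξ : Fin 2 → ZMod p) : ℂ :=
  ∑ y, A E y * ee p (dp ξ y)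

noncomputable def U (E : Finset (Fin 2 → ZMod p)) (s : ZMod p) : ℂ :=
  ∑ y₁, ∑ y₂, A E y₁ * A E y₂ * ee p (s * sqnorm (y₁ - y₂))

lemma sum_pi_two (f g : ZMod p → ℂ) :
    ∑ ξ : Fin 2 → ZMod p, f (ξ 0) * g (ξ 1) = (∑ u, f u) * (∑ u, g u) := by
  rw [Finset.sum_mul_sum]
  rw [show (∑ i : ZMod p, ∑ j : ZMod p, f i * g j) = ∑ q : ZMod p × ZMod p, f q.1 * g q.2 from
    (Fintype.sum_prod_type (fun q : ZMod p × ZMod p => f q.1 * g q.2)).symm]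
  exact Fintype.sum_equiv (piFinTwoEquiv (fun _ => ZMod p)) _ _ fun ξ => rfl

lemma sqnorm_two (d : Fin 2 → ZMod p) : sqnorm d = d 0 ^ 2 + d 1 ^ 2 := by
  rw [sqnorm, Fin.sum_univ_two]

lemma sumA (E : Finset (Fin 2 → ZMod p)) : ∑ x, A E x = (E.card : ℂ) := by
  simp only [A, Finset.sum_ite_mem, Finset.univ_inter, Finset.sum_const, nsmul_eq_mul, mul_one]

end IKP18

namespace IKP18

variable {p : ℕ} [hp : Fact p.Prime]

lemma orthV (d : Fin 2 → ZMod p) :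
    ∑ ξ : Fin 2 → ZMod p, ee p (dp ξ d) = if d = 0 then ((p : ℂ))^2 else 0 := by
  have : ∑ ξ : Fin 2 → ZMod p, ee p (dp ξ d)
      = (∑ u : ZMod p, ee p (u * d 0)) * (∑ u : ZMod p, ee p (u * d 1)) := by
    rw [← sum_pi_two]
    exact Finset.sum_congr rfl fun ξ _ => by rw [dp, AddChar.map_add_eq_mul]
  rw [this, orth, orth]
  by_cases h0 : d 0 = 0 <;> by_cases h1 : d 1 = 0
  · rw [if_pos h0, if_pos h1, if_pos (by funext i; fin_cases i <;> simpa)]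
    ring
  · rw [if_neg h1, mul_zero, if_neg (by intro h; exact h1 (by rw [h]; rfl))]
  · rw [if_neg h0, zero_mul, if_neg (by intro h; exact h0 (by rw [h]; rfl))]
  · rw [if_neg h1, mul_zero, if_neg (by intro h; exact h1 (by rw [h]; rfl))]

lemma U_zero (E : Finset (Fin 2 → ZMod p)) : U E 0 = ((E.card : ℂ)) ^ 2 := by
  rw [U]
  have : ∀ y₁ y₂ : Fin 2 → ZMod p, A E y₁ * A E y₂ * ee p (0 * sqnorm (y₁ - y₂)) = A E y₁ * A E y₂ := by
    intro y₁ y₂; rw [zero_mul, AddChar.map_zero_eq_one, mul_one]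
  rw [Finset.sum_congr rfl fun y₁ _ => Finset.sum_congr rfl fun y₂ _ => this y₁ y₂]
  rw [← Finset.sum_mul_sum, sumA]
  ring

lemma Fh_mul (E : Finset (Fin 2 → ZMod p)) (ξ : Fin 2 → ZMod p) :
    Fh E ξ * Fh E (-ξ) = ∑ y₁, ∑ y₂, A E y₁ * A E y₂ * ee p (dp ξ (y₁ - y₂)) := by
  rw [Fh, Fh, Finset.sum_mul_sum]
  refine Finset.sum_congr rfl fun y₁ _ => Finset.sum_congr rfl fun y₂ _ => ?_
  have : dp ξ (y₁ - y₂) = dp ξ y₁ + dp (-ξ) y₂ := by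
    simp only [dp, Pi.sub_apply, Pi.neg_apply]; ring
  rw [this, AddChar.map_add_eq_mul]
  ring

lemma parseval (E : Finset (Fin 2 → ZMod p)) :
    ∑ ξ : Fin 2 → ZMod p, Fh E ξ * Fh E (-ξ) = ((p : ℂ))^2 * E.card := by
  rw [Finset.sum_congr rfl fun ξ _ => Fh_mul E ξ]
  rw [Finset.sum_comm]
  rw [Finset.sum_congr rfl fun y₁ (_ : y₁ ∈ Finset.univ) => Finset.sum_comm]
  have : ∀ y₁ y₂ : Fin 2 → ZMod p,
      ∑ ξ : Fin 2 → ZMod p, A E y₁ * A E y₂ * ee p (dp ξ (y₁ - y₂))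
        = A E y₁ * A E y₂ * (if y₁ - y₂ = 0 then ((p:ℂ))^2 else 0) := by
    intro y₁ y₂
    rw [← Finset.mul_sum, orthV]
  rw [Finset.sum_congr rfl fun y₁ _ => Finset.sum_congr rfl fun y₂ _ => this y₁ y₂]
  have : ∀ y₁ y₂ : Fin 2 → ZMod p,
      A E y₁ * A E y₂ * (if y₁ - y₂ = 0 then ((p:ℂ))^2 else 0)
        = if y₂ = y₁ then A E y₁ * A E y₁ * (p:ℂ)^2 else 0 := by
    intro y₁ y₂
    by_cases h : y₂ = y₁
    · rw [h, sub_self, if_pos rfl, if_pos rfl]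
    · rw [if_neg (fun hh => h (sub_eq_zero.mp hh).symm), if_neg h, mul_zero]
  rw [Finset.sum_congr rfl fun y₁ _ => Finset.sum_congr rfl fun y₂ _ => this y₁ y₂]
  rw [Finset.sum_congr rfl fun y₁ (_ : y₁ ∈ Finset.univ) => Finset.sum_ite_eq' Finset.univ y₁ _]
  have : ∀ y₁ : Fin 2 → ZMod p, (if y₁ ∈ Finset.univ then A E y₁ * A E y₁ * (p:ℂ)^2 else 0)
      = (p:ℂ)^2 * A E y₁ := by
    intro y₁
    rw [if_pos (Finset.mem_univ _)]
    rw [A]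
    by_cases h : y₁ ∈ E <;> simp [h]
  rw [Finset.sum_congr rfl fun y₁ _ => this y₁, ← Finset.mul_sum, sumA]

lemma Fh_conj (E : Finset (Fin 2 → ZMod p)) (ξ : Fin 2 → ZMod p) :
    Fh E (-ξ) = (starRingEnd ℂ) (Fh E ξ) := by
  rw [Fh, Fh, map_sum]
  refine Finset.sum_congr rfl fun y _ => ?_
  rw [map_mul]
  have h1 : (starRingEnd ℂ) (A E y) = A E y := by
    rw [A]; by_cases h : y ∈ E <;> simp [h]
  have h2 : dp (-ξ) y = -(dp ξ y) := by simp only [dp, Pi.neg_apply]; ring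
  rw [h1, h2, ee_neg]

lemma Fh_sq (E : Finset (Fin 2 → ZMod p)) (ξ : Fin 2 → ZMod p) :
    Fh E ξ * Fh E (-ξ) = ((Complex.normSq (Fh E ξ) : ℝ) : ℂ) := by
  rw [Fh_conj, Complex.mul_conj]

end IKP18

namespace IKP18

variable {p : ℕ} [hp : Fact p.Prime]

lemma key (hp4 : p % 4 = 3) (E : Finset (Fin 2 → ZMod p)) {s : ZMod p} (hs : s ≠ 0) :
    ∑ ξ : Fin 2 → ZMod p, ee p (-(sqnorm ξ) * (4*s)⁻¹) * (Fh E ξ * Fh E (-ξ))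
      = (-(p:ℂ)) * U E s := by
  have hp2 : p ≠ 2 := by omega
  have h4s : (4 * s : ZMod p) ≠ 0 := mul_ne_zero (four_ne hp2) hs
  set c : ZMod p := -((4*s)⁻¹) with hcdef
  have hcne : c ≠ 0 := neg_ne_zero.mpr (inv_ne_zero h4s)
  have h4c : ∀ x : ZMod p, -(x) * (4*c)⁻¹ = s * x := by
    intro x
    have h1 : (4 : ZMod p) * c = -(s⁻¹) := by
      rw [hcdef, mul_inv, neg_mul_eq_mul_neg, ← mul_assoc,
        mul_inv_cancel₀ (four_ne hp2), one_mul]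
    rw [h1, inv_neg, inv_inv]
    ring
  have inner : ∀ d : Fin 2 → ZMod p,
      ∑ ξ : Fin 2 → ZMod p, ee p (c * sqnorm ξ + dp ξ d) = ee p (s * sqnorm d) * (-(p:ℂ)) := by
    intro d
    have e1 : ∀ ξ : Fin 2 → ZMod p, ee p (c * sqnorm ξ + dp ξ d)
        = ee p (c * (ξ 0)^2 + d 0 * ξ 0) * ee p (c * (ξ 1)^2 + d 1 * ξ 1) := by
      intro ξ
      rw [← AddChar.map_add_eq_mul]
      congr 1
      rw [sqnorm_two, dp]
      ring
    rw [Finset.sum_congr rfl fun ξ _ => e1 ξ]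
    rw [sum_pi_two (fun u => ee p (c*u^2 + d 0 * u)) (fun u => ee p (c*u^2 + d 1 * u))]
    rw [csq hp2 hcne (d 0), csq hp2 hcne (d 1)]
    rw [h4c ((d 0)^2), h4c ((d 1)^2)]
    have hre : ee p (s * d 0 ^ 2) * (∑ u : ZMod p, ee p (c * u ^ 2))
        * (ee p (s * d 1 ^ 2) * (∑ u : ZMod p, ee p (c * u ^ 2)))
        = (ee p (s * d 0 ^ 2) * ee p (s * d 1 ^ 2)) * (∑ u : ZMod p, ee p (c * u ^ 2))^2 := by
      ring
    rw [hre, Gsq hp4 hcne, ← AddChar.map_add_eq_mul]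
    congr 2
    rw [sqnorm_two]
    ring
  calc ∑ ξ : Fin 2 → ZMod p, ee p (-(sqnorm ξ) * (4*s)⁻¹) * (Fh E ξ * Fh E (-ξ))
      = ∑ ξ : Fin 2 → ZMod p, ∑ y₁, ∑ y₂,
          A E y₁ * A E y₂ * ee p (c * sqnorm ξ + dp ξ (y₁ - y₂)) := by
        refine Finset.sum_congr rfl fun ξ _ => ?_
        rw [Fh_mul, Finset.mul_sum]
        refine Finset.sum_congr rfl fun y₁ _ => ?_
        rw [Finset.mul_sum]
        refine Finset.sum_congr rfl fun y₂ _ => ?_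
        rw [AddChar.map_add_eq_mul]
        have hcc : -(sqnorm ξ) * (4*s)⁻¹ = c * sqnorm ξ := by rw [hcdef]; ring
        rw [hcc]
        ring
    _ = ∑ y₁, ∑ y₂, A E y₁ * A E y₂ * (ee p (s * sqnorm (y₁ - y₂)) * (-(p:ℂ))) := by
        rw [Finset.sum_comm]
        refine Finset.sum_congr rfl fun y₁ _ => ?_
        rw [Finset.sum_comm]
        refine Finset.sum_congr rfl fun y₂ _ => ?_
        rw [← Finset.mul_sum, inner]
    _ = (-(p:ℂ)) * U E s := by
        rw [U, Finset.mul_sum]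
        refine Finset.sum_congr rfl fun y₁ _ => ?_
        rw [Finset.mul_sum]
        exact Finset.sum_congr rfl fun y₂ _ => by ring

end IKP18

namespace IKP18

variable {p : ℕ} [hp : Fact p.Prime]

def NN (r : ZMod p) (E : Finset (Fin 2 → ZMod p)) : ℕ :=
  (Finset.univ.filter
    (fun z : ((Fin 2 → ZMod p) × (Fin 2 → ZMod p)) × ((Fin 2 → ZMod p) × (Fin 2 → ZMod p)) =>
      z.1.1 ∈ E ∧ z.1.2 ∈ E ∧ z.2.1 ∈ E ∧ z.2.2 ∈ E ∧
      sqnorm (z.2.1 - z.2.2) = r * sqnorm (z.1.1 - z.1.2))).card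

lemma U_pair (E : Finset (Fin 2 → ZMod p)) (s : ZMod p) :
    U E s = ∑ q : (Fin 2 → ZMod p) × (Fin 2 → ZMod p),
      A E q.1 * A E q.2 * ee p (s * sqnorm (q.1 - q.2)) := by
  rw [U, Fintype.sum_prod_type]

lemma count_eq (r : ZMod p) (E : Finset (Fin 2 → ZMod p)) :
    ((NN r E : ℂ)) * p = ∑ s : ZMod p, U E s * U E (-(s*r)) := by
  classical
  have claim1 : ∀ s : ZMod p, U E s * U E (-(s*r))
      = ∑ z : ((Fin 2 → ZMod p) × (Fin 2 → ZMod p)) × ((Fin 2 → ZMod p) × (Fin 2 → ZMod p)),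
        (A E z.1.1 * A E z.1.2 * A E z.2.1 * A E z.2.2)
          * ee p (s * (sqnorm (z.2.1 - z.2.2) - r * sqnorm (z.1.1 - z.1.2))) := by
    intro s
    rw [mul_comm, U_pair, U_pair, Finset.sum_mul_sum]
    rw [show (∑ z : ((Fin 2 → ZMod p) × (Fin 2 → ZMod p)) × ((Fin 2 → ZMod p) × (Fin 2 → ZMod p)),
        (A E z.1.1 * A E z.1.2 * A E z.2.1 * A E z.2.2)
          * ee p (s * (sqnorm (z.2.1 - z.2.2) - r * sqnorm (z.1.1 - z.1.2))))
        = ∑ a : (Fin 2 → ZMod p) × (Fin 2 → ZMod p), ∑ b : (Fin 2 → ZMod p) × (Fin 2 → ZMod p),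
        (A E a.1 * A E a.2 * A E b.1 * A E b.2)
          * ee p (s * (sqnorm (b.1 - b.2) - r * sqnorm (a.1 - a.2))) from
      Fintype.sum_prod_type _]
    refine Finset.sum_congr rfl fun a _ => Finset.sum_congr rfl fun b _ => ?_
    have : s * (sqnorm (b.1 - b.2) - r * sqnorm (a.1 - a.2))
        = (-(s*r)) * sqnorm (a.1 - a.2) + s * sqnorm (b.1 - b.2) := by ring
    rw [this, AddChar.map_add_eq_mul]
    ring
  rw [Finset.sum_congr rfl fun s _ => claim1 s, Finset.sum_comm]
  have inner : ∀ z : ((Fin 2 → ZMod p) × (Fin 2 → ZMod p)) × ((Fin 2 → ZMod p) × (Fin 2 → ZMod p)),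
      ∑ s : ZMod p, (A E z.1.1 * A E z.1.2 * A E z.2.1 * A E z.2.2)
          * ee p (s * (sqnorm (z.2.1 - z.2.2) - r * sqnorm (z.1.1 - z.1.2)))
      = if (z.1.1 ∈ E ∧ z.1.2 ∈ E ∧ z.2.1 ∈ E ∧ z.2.2 ∈ E ∧
          sqnorm (z.2.1 - z.2.2) = r * sqnorm (z.1.1 - z.1.2)) then (p:ℂ) else 0 := by
    intro z
    rw [← Finset.mul_sum, orth]
    rw [A, A, A, A]
    by_cases h1 : z.1.1 ∈ E <;> by_cases h2 : z.1.2 ∈ E <;> by_cases h3 : z.2.1 ∈ E <;>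
      by_cases h4 : z.2.2 ∈ E <;> simp [h1, h2, h3, h4, sub_eq_zero]
  rw [Finset.sum_congr rfl fun z _ => inner z]
  rw [Finset.sum_ite, Finset.sum_const_zero, add_zero, Finset.sum_const, nsmul_eq_mul]
  rfl

end IKP18

namespace IKP18

variable {p : ℕ} [hp : Fact p.Prime]

noncomputable def KK (r : ZMod p) (E : Finset (Fin 2 → ZMod p)) : ℝ :=
  ∑ ξ : Fin 2 → ZMod p, ∑ ζ : Fin 2 → ZMod p,
    if sqnorm ζ = r * sqnorm ξ then Complex.normSq (Fh E ξ) * Complex.normSq (Fh E ζ) else 0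

lemma spectral (hp4 : p % 4 = 3) {r : ZMod p} (hr : r ≠ 0) (E : Finset (Fin 2 → ZMod p)) :
    (p:ℂ)^2 * ∑ s ∈ Finset.univ.erase (0 : ZMod p), U E s * U E (-(s*r))
      = (p:ℂ) * ((KK r E : ℝ) : ℂ) - ((p:ℂ)^2 * E.card)^2 := by
  have hp2 : p ≠ 2 := by omega
  have h4 : (4 : ZMod p) ≠ 0 := four_ne hp2
  have step1 : ∀ s ∈ Finset.univ.erase (0:ZMod p), (p:ℂ)^2 * (U E s * U E (-(s*r)))
      = ∑ ξ : Fin 2 → ZMod p, ∑ ζ : Fin 2 → ZMod p,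
        (Fh E ξ * Fh E (-ξ)) * (Fh E ζ * Fh E (-ζ))
          * ee p ((4*s*r)⁻¹ * (sqnorm ζ - r * sqnorm ξ)) := by
    intro s hs
    have hs0 : s ≠ 0 := (Finset.mem_erase.mp hs).1
    have hsr : (-(s*r)) ≠ 0 := neg_ne_zero.mpr (mul_ne_zero hs0 hr)
    have e1 := key hp4 E hs0
    have e2 := key hp4 E hsr
    have hpr : (p:ℂ)^2 * (U E s * U E (-(s*r)))
        = ((-(p:ℂ)) * U E s) * ((-(p:ℂ)) * U E (-(s*r))) := by ring
    rw [hpr, ← e1, ← e2, Finset.sum_mul_sum]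
    refine Finset.sum_congr rfl fun ξ _ => Finset.sum_congr rfl fun ζ _ => ?_
    have harg : (-(sqnorm ξ) * (4*s)⁻¹) + (-(sqnorm ζ) * (4*(-(s*r)))⁻¹)
        = (4*s*r)⁻¹ * (sqnorm ζ - r * sqnorm ξ) := by
      field_simp
      ring
    calc ee p (-(sqnorm ξ) * (4*s)⁻¹) * (Fh E ξ * Fh E (-ξ))
          * (ee p (-(sqnorm ζ) * (4*(-(s*r)))⁻¹) * (Fh E ζ * Fh E (-ζ)))
        = (Fh E ξ * Fh E (-ξ)) * (Fh E ζ * Fh E (-ζ))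
            * (ee p (-(sqnorm ξ) * (4*s)⁻¹) * ee p (-(sqnorm ζ) * (4*(-(s*r)))⁻¹)) := by ring
      _ = (Fh E ξ * Fh E (-ξ)) * (Fh E ζ * Fh E (-ζ))
            * ee p ((4*s*r)⁻¹ * (sqnorm ζ - r * sqnorm ξ)) := by
          rw [← AddChar.map_add_eq_mul, harg]
  have reindex : ∀ w : ZMod p,
      ∑ s ∈ Finset.univ.erase (0:ZMod p), ee p ((4*s*r)⁻¹ * w)
        = (if w = 0 then (p:ℂ) else 0) - 1 := by
    intro w
    have hbij : ∑ s ∈ Finset.univ.erase (0:ZMod p), ee p ((4*s*r)⁻¹ * w)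
        = ∑ u ∈ Finset.univ.erase (0:ZMod p), ee p (u * w) := by
      refine Finset.sum_nbij' (fun s => (4*s*r)⁻¹) (fun u => (4*u*r)⁻¹) ?_ ?_ ?_ ?_ ?_
      · intro a ha
        have ha0 : a ≠ 0 := (Finset.mem_erase.mp ha).1
        exact Finset.mem_erase.mpr ⟨inv_ne_zero (mul_ne_zero (mul_ne_zero h4 ha0) hr), Finset.mem_univ _⟩
      · intro a ha
        have ha0 : a ≠ 0 := (Finset.mem_erase.mp ha).1
        exact Finset.mem_erase.mpr ⟨inv_ne_zero (mul_ne_zero (mul_ne_zero h4 ha0) hr), Finset.mem_univ _⟩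
      · intro a ha
        have ha0 : a ≠ 0 := (Finset.mem_erase.mp ha).1
        field_simp
      · intro a ha
        have ha0 : a ≠ 0 := (Finset.mem_erase.mp ha).1
        field_simp
      · intro a _
        rfl
    rw [hbij]
    have hsplit := Finset.add_sum_erase Finset.univ (fun u => ee p (u * w)) (Finset.mem_univ (0:ZMod p))
    have horth := orth (p := p) w
    simp only [zero_mul, AddChar.map_zero_eq_one] at hsplit
    rw [horth] at hsplit
    linear_combination hsplit
  rw [Finset.mul_sum, Finset.sum_congr rfl step1, Finset.sum_comm]
  rw [Finset.sum_congr rfl fun ξ (_ : ξ ∈ Finset.univ) => Finset.sum_comm]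
  have inner : ∀ ξ ζ : Fin 2 → ZMod p,
      ∑ s ∈ Finset.univ.erase (0:ZMod p),
        (Fh E ξ * Fh E (-ξ)) * (Fh E ζ * Fh E (-ζ)) * ee p ((4*s*r)⁻¹ * (sqnorm ζ - r * sqnorm ξ))
      = (if sqnorm ζ = r * sqnorm ξ
          then ((Complex.normSq (Fh E ξ) : ℂ)) * ((Complex.normSq (Fh E ζ) : ℂ)) * (p:ℂ) else 0)
        - ((Complex.normSq (Fh E ξ) : ℂ)) * ((Complex.normSq (Fh E ζ) : ℂ)) := by
    intro ξ ζ
    rw [← Finset.mul_sum, reindex (sqnorm ζ - r * sqnorm ξ), Fh_sq, Fh_sq]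
    by_cases h : sqnorm ζ = r * sqnorm ξ
    · rw [if_pos (by rw [h, sub_self]), if_pos h]
      ring
    · rw [if_neg (fun hh => h (sub_eq_zero.mp hh)), if_neg h]
      ring
  rw [Finset.sum_congr rfl fun ξ _ => Finset.sum_congr rfl fun ζ _ => inner ξ ζ]
  have hsplit2 : ∑ ξ : Fin 2 → ZMod p, ∑ ζ : Fin 2 → ZMod p,
      ((if sqnorm ζ = r * sqnorm ξ
          then ((Complex.normSq (Fh E ξ) : ℂ)) * ((Complex.normSq (Fh E ζ) : ℂ)) * (p:ℂ) else 0)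
        - ((Complex.normSq (Fh E ξ) : ℂ)) * ((Complex.normSq (Fh E ζ) : ℂ)))
      = (∑ ξ : Fin 2 → ZMod p, ∑ ζ : Fin 2 → ZMod p,
          (if sqnorm ζ = r * sqnorm ξ
          then ((Complex.normSq (Fh E ξ) : ℂ)) * ((Complex.normSq (Fh E ζ) : ℂ)) * (p:ℂ) else 0))
        - (∑ ξ : Fin 2 → ZMod p, ((Complex.normSq (Fh E ξ) : ℂ)))
          * (∑ ζ : Fin 2 → ZMod p, ((Complex.normSq (Fh E ζ) : ℂ))) := by
    rw [Finset.sum_mul_sum, ← Finset.sum_sub_distrib]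
    exact Finset.sum_congr rfl fun ξ _ => by rw [← Finset.sum_sub_distrib]
  rw [hsplit2]
  have hpar : (∑ ξ : Fin 2 → ZMod p, ((Complex.normSq (Fh E ξ) : ℂ))) = (p:ℂ)^2 * E.card := by
    rw [← parseval E]
    exact Finset.sum_congr rfl fun ξ _ => (Fh_sq E ξ).symm
  have hK : (∑ ξ : Fin 2 → ZMod p, ∑ ζ : Fin 2 → ZMod p,
      (if sqnorm ζ = r * sqnorm ξ
          then ((Complex.normSq (Fh E ξ) : ℂ)) * ((Complex.normSq (Fh E ζ) : ℂ)) * (p:ℂ) else 0))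
      = (p:ℂ) * ((KK r E : ℝ) : ℂ) := by
    rw [KK]
    push_cast
    rw [Finset.mul_sum]
    refine Finset.sum_congr rfl fun ξ _ => ?_
    rw [Finset.mul_sum]
    refine Finset.sum_congr rfl fun ζ _ => ?_
    rw [apply_ite (fun x : ℝ => (x : ℂ))]
    by_cases h : sqnorm ζ = r * sqnorm ξ <;> simp [h] <;> ring
  rw [hK, hpar]
  ring

end IKP18

namespace IKP18

variable {p : ℕ} [hp : Fact p.Prime]

lemma KK_ge (r : ZMod p) (E : Finset (Fin 2 → ZMod p)) :
    ((E.card : ℝ))^4 ≤ KK r E := by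
  have h0 : Fh E 0 = ((E.card : ℝ) : ℂ) := by
    rw [Fh]
    have hdp : ∀ y : Fin 2 → ZMod p, dp (0 : Fin 2 → ZMod p) y = 0 := by
      intro y; simp [dp]
    rw [Finset.sum_congr rfl fun y _ => by rw [hdp y, AddChar.map_zero_eq_one, mul_one]]
    rw [sumA]
    norm_num
  have hterm : Complex.normSq (Fh E 0) = (E.card:ℝ)^2 := by
    rw [h0, Complex.normSq_ofReal]; ring
  have hsq0 : sqnorm (0 : Fin 2 → ZMod p) = 0 := by simp [sqnorm]
  have hnn : ∀ (ξ ζ : Fin 2 → ZMod p), 0 ≤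
      (if sqnorm ζ = r * sqnorm ξ then Complex.normSq (Fh E ξ) * Complex.normSq (Fh E ζ) else 0) := by
    intro ξ ζ
    by_cases h : sqnorm ζ = r * sqnorm ξ
    · rw [if_pos h]; exact mul_nonneg (Complex.normSq_nonneg _) (Complex.normSq_nonneg _)
    · rw [if_neg h]
  have h1 : ((E.card : ℝ))^4
      = (if sqnorm (0 : Fin 2 → ZMod p) = r * sqnorm (0 : Fin 2 → ZMod p)
          then Complex.normSq (Fh E 0) * Complex.normSq (Fh E 0) else 0) := by
    rw [if_pos (by rw [hsq0, mul_zero]), hterm]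
    ring
  have h2 : (if sqnorm (0 : Fin 2 → ZMod p) = r * sqnorm (0 : Fin 2 → ZMod p)
          then Complex.normSq (Fh E 0) * Complex.normSq (Fh E 0) else 0)
      ≤ ∑ ζ : Fin 2 → ZMod p,
          (if sqnorm ζ = r * sqnorm (0 : Fin 2 → ZMod p)
            then Complex.normSq (Fh E 0) * Complex.normSq (Fh E ζ) else 0) :=
    Finset.single_le_sum (fun ζ _ => hnn 0 ζ) (Finset.mem_univ 0)
  have h3 : ∑ ζ : Fin 2 → ZMod p,
          (if sqnorm ζ = r * sqnorm (0 : Fin 2 → ZMod p)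
            then Complex.normSq (Fh E 0) * Complex.normSq (Fh E ζ) else 0)
      ≤ KK r E := by
    rw [KK]
    refine Finset.single_le_sum (f := fun ξ : Fin 2 → ZMod p => ∑ ζ : Fin 2 → ZMod p,
        (if sqnorm ζ = r * sqnorm ξ
          then Complex.normSq (Fh E ξ) * Complex.normSq (Fh E ζ) else 0))
      (fun ξ _ => ?_) (Finset.mem_univ 0)
    exact Finset.sum_nonneg (fun ζ _ => hnn ξ ζ)
  linarith

lemma diag (hp4 : p % 4 = 3) (r : ZMod p)  (E : Finset (Fin 2 → ZMod p)) :
    (Finset.univ.filter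
      (fun z : ((Fin 2 → ZMod p) × (Fin 2 → ZMod p)) × ((Fin 2 → ZMod p) × (Fin 2 → ZMod p)) =>
        (z.1.1 ∈ E ∧ z.1.2 ∈ E ∧ z.2.1 ∈ E ∧ z.2.2 ∈ E ∧
          sqnorm (z.2.1 - z.2.2) = r * sqnorm (z.1.1 - z.1.2)) ∧ z.1.1 = z.1.2)).card
      = E.card ^ 2 := by
  classical
  rw [sq, ← Finset.card_product]
  refine Finset.card_nbij' (fun z => (z.1.1, z.2.1)) (fun q => ((q.1, q.1), (q.2, q.2))) ?_ ?_ ?_ ?_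
  · intro z hz
    rw [Finset.mem_coe, Finset.mem_filter] at hz
    exact Finset.mem_product.mpr ⟨hz.2.1.1, hz.2.1.2.2.1⟩
  · intro q hq
    rw [Finset.mem_coe, Finset.mem_product] at hq
    refine Finset.mem_filter.mpr ⟨Finset.mem_univ _, ⟨⟨hq.1, hq.1, hq.2, hq.2, ?_⟩, rfl⟩⟩
    simp [sqnorm]
  · intro z hz
    rw [Finset.mem_coe, Finset.mem_filter] at hz
    obtain ⟨-, ⟨h1, h2, h3, h4, h5⟩, h6⟩ := hz
    have hy : z.2.1 = z.2.2 := by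
      have : sqnorm (z.2.1 - z.2.2) = 0 := by
        rw [h5, ← h6, sub_self]
        rw [show sqnorm (0 : Fin 2 → ZMod p) = 0 by simp [sqnorm], mul_zero]
      have := (normzero hp4 _).mp this
      exact sub_eq_zero.mp this
    ext <;> simp [← h6, ← hy]
  · intro q hq
    rfl

end IKP18

open IKP18 in
theorem stmt18 (p : ℕ) [Fact p.Prime] (hp4 : p % 4 = 3)
    (r : ZMod p) (hr : r ≠ 0) (E : Finset (Fin 2 → ZMod p)) (hE : 2 * p < E.card) :
    ((E.card : ℝ)) ^ 4 / (3 * (p : ℝ))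
      < (Nat.card {xy : ((Fin 2 → ZMod p) × (Fin 2 → ZMod p)) × ((Fin 2 → ZMod p) × (Fin 2 → ZMod p)) |
          xy.1.1 ∈ E ∧ xy.1.2 ∈ E ∧ xy.2.1 ∈ E ∧ xy.2.2 ∈ E ∧
          sqnorm (xy.2.1 - xy.2.2) = r * sqnorm (xy.1.1 - xy.1.2) ∧ xy.1.1 ≠ xy.1.2} : ℝ) := by
  classical
  set S : Finset (((Fin 2 → ZMod p) × (Fin 2 → ZMod p)) × ((Fin 2 → ZMod p) × (Fin 2 → ZMod p))) :=
    Finset.univ.filter (fun z => (z.1.1 ∈ E ∧ z.1.2 ∈ E ∧ z.2.1 ∈ E ∧ z.2.2 ∈ E ∧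
      sqnorm (z.2.1 - z.2.2) = r * sqnorm (z.1.1 - z.1.2)) ∧ z.1.1 ≠ z.1.2) with hSdef
  set D : Finset (((Fin 2 → ZMod p) × (Fin 2 → ZMod p)) × ((Fin 2 → ZMod p) × (Fin 2 → ZMod p))) :=
    Finset.univ.filter (fun z => (z.1.1 ∈ E ∧ z.1.2 ∈ E ∧ z.2.1 ∈ E ∧ z.2.2 ∈ E ∧
      sqnorm (z.2.1 - z.2.2) = r * sqnorm (z.1.1 - z.1.2)) ∧ z.1.1 = z.1.2) with hDdef
  have hNatcard : Nat.card {xy : ((Fin 2 → ZMod p) × (Fin 2 → ZMod p)) × ((Fin 2 → ZMod p) × (Fin 2 → ZMod p)) |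
          xy.1.1 ∈ E ∧ xy.1.2 ∈ E ∧ xy.2.1 ∈ E ∧ xy.2.2 ∈ E ∧
          sqnorm (xy.2.1 - xy.2.2) = r * sqnorm (xy.1.1 - xy.1.2) ∧ xy.1.1 ≠ xy.1.2} = S.card := by
    have hset : {xy : ((Fin 2 → ZMod p) × (Fin 2 → ZMod p)) × ((Fin 2 → ZMod p) × (Fin 2 → ZMod p)) |
          xy.1.1 ∈ E ∧ xy.1.2 ∈ E ∧ xy.2.1 ∈ E ∧ xy.2.2 ∈ E ∧
          sqnorm (xy.2.1 - xy.2.2) = r * sqnorm (xy.1.1 - xy.1.2) ∧ xy.1.1 ≠ xy.1.2}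
        = (↑S : Set _) := by
      ext z
      simp only [hSdef, Set.mem_setOf_eq, Finset.coe_filter, Finset.mem_univ, true_and]
      tauto
    rw [hset, Nat.card_coe_set_eq, Set.ncard_coe_finset]
  have hsplitN : NN r E = S.card + E.card ^ 2 := by
    have hunion : (Finset.univ.filter
        (fun z : ((Fin 2 → ZMod p) × (Fin 2 → ZMod p)) × ((Fin 2 → ZMod p) × (Fin 2 → ZMod p)) =>
          z.1.1 ∈ E ∧ z.1.2 ∈ E ∧ z.2.1 ∈ E ∧ z.2.2 ∈ E ∧
          sqnorm (z.2.1 - z.2.2) = r * sqnorm (z.1.1 - z.1.2))) = S ∪ D := by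
      ext z
      simp only [hSdef, hDdef, Finset.mem_filter, Finset.mem_union, Finset.mem_univ, true_and]
      tauto
    have hdisj : Disjoint S D := by
      rw [Finset.disjoint_left]
      intro z hzS hzD
      rw [hSdef, Finset.mem_filter] at hzS
      rw [hDdef, Finset.mem_filter] at hzD
      exact hzS.2.2 hzD.2.2
    have : NN r E = (S ∪ D).card := by rw [NN, hunion]
    rw [this, Finset.card_union_of_disjoint hdisj, diag hp4 r E]
  -- complex identity
  have h1 := count_eq r E
  have h2 := spectral hp4 hr E
  have hsum := Finset.add_sum_erase Finset.univ (fun s => U E s * U E (-(s*r)))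
    (Finset.mem_univ (0:ZMod p))
  have hU0 : U E 0 * U E (-((0:ZMod p)*r)) = ((E.card:ℂ))^2 * ((E.card:ℂ))^2 := by
    rw [show -((0:ZMod p)*r) = 0 by ring, U_zero]
  have hC : (NN r E : ℂ) * (p:ℂ)^3
      = (p:ℂ)^2*(E.card:ℂ)^4 + (p:ℂ) * ((KK r E : ℝ):ℂ) - (p:ℂ)^4*(E.card:ℂ)^2 := by
    calc (NN r E : ℂ) * (p:ℂ)^3 = ((NN r E : ℂ) * (p:ℂ)) * (p:ℂ)^2 := by ring
      _ = (∑ s : ZMod p, U E s * U E (-(s*r))) * (p:ℂ)^2 := by rw [h1]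
      _ = (U E 0 * U E (-((0:ZMod p)*r))
            + ∑ s ∈ Finset.univ.erase (0:ZMod p), U E s * U E (-(s*r))) * (p:ℂ)^2 := by
          rw [hsum]
      _ = (p:ℂ)^2*(E.card:ℂ)^4
            + (p:ℂ)^2 * ∑ s ∈ Finset.univ.erase (0:ZMod p), U E s * U E (-(s*r)) := by
          rw [hU0]; ring
      _ = (p:ℂ)^2*(E.card:ℂ)^4 + ((p:ℂ) * ((KK r E : ℝ):ℂ) - ((p:ℂ)^2 * (E.card:ℂ))^2) := by
          rw [h2]
      _ = (p:ℂ)^2*(E.card:ℂ)^4 + (p:ℂ) * ((KK r E : ℝ):ℂ) - (p:ℂ)^4*(E.card:ℂ)^2 := by ring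
  have hRe : (NN r E : ℝ) * (p:ℝ)^3
      = (p:ℝ)^2*(E.card:ℝ)^4 + (p:ℝ) * KK r E - (p:ℝ)^4*(E.card:ℝ)^2 := by
    exact_mod_cast hC
  -- real arithmetic
  have hpge3 : 3 ≤ p := by omega
  have hp0 : (0:ℝ) < p := by
    have : 0 < p := by omega
    exact_mod_cast this
  have hp3R : (3:ℝ) ≤ p := by
    have : 3 ≤ p := by omega
    exact_mod_cast this
  have haR : 2*(p:ℝ)+1 ≤ (E.card:ℝ) := by
    have : 2*p+1 ≤ E.card := by omega
    exact_mod_cast this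
  have ha0 : (0:ℝ) < (E.card:ℝ) := by linarith
  have hNS : (NN r E : ℝ) = (S.card:ℝ) + (E.card:ℝ)^2 := by
    rw [hsplitN]; push_cast; ring
  have hpK : (p:ℝ)*(E.card:ℝ)^4 ≤ (p:ℝ) * KK r E :=
    mul_le_mul_of_nonneg_left (KK_ge r E) (le_of_lt hp0)
  have hS3 : (p:ℝ)^2*(E.card:ℝ)^4 + (p:ℝ)*(E.card:ℝ)^4 - (p:ℝ)^4*(E.card:ℝ)^2
      - (p:ℝ)^3*(E.card:ℝ)^2 ≤ (S.card:ℝ)*(p:ℝ)^3 := by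
    have hsub : (S.card:ℝ)*(p:ℝ)^3 = (NN r E : ℝ)*(p:ℝ)^3 - (E.card:ℝ)^2*(p:ℝ)^3 := by
      rw [hNS]; ring
    rw [hsub]
    linarith [hRe, hpK]
  rw [hNatcard, div_lt_iff₀ (by positivity)]
  have hsq : (2*(p:ℝ)+1)^2 ≤ (E.card:ℝ)^2 := by nlinarith [haR, hp0]
  have e1 : 3*(p:ℝ)*((p:ℝ)^2*(E.card:ℝ)^4 + (p:ℝ)*(E.card:ℝ)^4 - (p:ℝ)^4*(E.card:ℝ)^2
      - (p:ℝ)^3*(E.card:ℝ)^2) ≤ 3*(p:ℝ)*((S.card:ℝ)*(p:ℝ)^3) :=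
    mul_le_mul_of_nonneg_left hS3 (by positivity)
  have e2 : (p:ℝ)^3*(E.card:ℝ)^4 < 3*(p:ℝ)*((p:ℝ)^2*(E.card:ℝ)^4 + (p:ℝ)*(E.card:ℝ)^4
      - (p:ℝ)^4*(E.card:ℝ)^2 - (p:ℝ)^3*(E.card:ℝ)^2) := by
    have k1 : 2*(p:ℝ)^3*(E.card:ℝ)^2*(2*(p:ℝ)+1)^2 ≤ 2*(p:ℝ)^3*(E.card:ℝ)^2*(E.card:ℝ)^2 :=
      mul_le_mul_of_nonneg_left hsq (by positivity)
    nlinarith [k1,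
      (by positivity : (0:ℝ) < (p:ℝ)^5*(E.card:ℝ)^2),
      (by positivity : (0:ℝ) < (p:ℝ)^4*(E.card:ℝ)^2),
      (by positivity : (0:ℝ) < (p:ℝ)^3*(E.card:ℝ)^2),
      (by positivity : (0:ℝ) < (p:ℝ)^2*(E.card:ℝ)^4)]
  have e3 : (p:ℝ)^3*(E.card:ℝ)^4 < 3*(p:ℝ)*((S.card:ℝ)*(p:ℝ)^3) := lt_of_lt_of_le e2 e1
  have e4 : (E.card:ℝ)^4 * (p:ℝ)^3 < ((S.card:ℝ) * (3*(p:ℝ))) * (p:ℝ)^3 := by linarith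
  exact lt_of_mul_lt_mul_right e4 (by positivity : (0:ℝ) ≤ (p:ℝ)^3)
end
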